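/- arXiv:2201.08971 — 3 statements merged into one kernel-verified Lean document; each statement's English description precedes it below -/
import Mathlib

section
/- Suppose n ∈ C([0,1]) and σ ∈ C²([0,1]) satisfy Assumption A with constants n₁, n₂, M₁, M₂, let m ≥ 1 be an integer and let k > 0. Let ψ : (0,1] → ℝ be twice differentiable, not identically zero, and satisfy ψ''(r) + [k²n(r)²/σ(r) + σ'(r)²/(4σ(r)²) − σ''(r)/(2σ(r)) − σ'(r)/(2σ(r)r) − (m² − 1/4)/r²]·ψ(r) = 0 for all r ∈ (0,1]. Suppose 0 < a < b ≤ 1 are such that J_m(k√M₁·a) = J_m(k√M₁·b) = 0 and J_m(k√M₁·r) ≠ 0 for all r ∈ (a,b). Then ψ has at least one zero in the interval [a,b]. -/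
open Set

noncomputable section

/-- The Bessel function of the first kind of order `ν`:
`J_ν(x) = Σ_{s=0}^∞ ((−1)^s / (s!·Γ(ν+s+1)))·(x/2)^{2s+ν}`. -/
def besselJ (ν : ℝ) (x : ℝ) : ℝ :=
  ∑' s : ℕ, ((-1 : ℝ) ^ s / ((s.factorial : ℝ) * Real.Gamma (ν + (s : ℝ) + 1)))
    * (x / 2) ^ (2 * (s : ℝ) + ν)

/-- Assumption A: `n ∈ C([0,1])`, `σ ∈ C²([0,1])`, with constants
`1 < n₁ < n₂`, `1 < M₁ < M₂`, such that on `[0,1]` one has `n₁ < n < n₂`, `σ' ≤ 0`,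
`M₁ ≤ n²/σ ≤ M₂` and `σ'² ≥ 2σ''σ`. -/
def AssumptionA (n σ : ℝ → ℝ) (n₁ n₂ M₁ M₂ : ℝ) : Prop :=
  1 < n₁ ∧ n₁ < n₂ ∧ 1 < M₁ ∧ M₁ < M₂ ∧
  ContinuousOn n (Icc 0 1) ∧ ContDiffOn ℝ 2 σ (Icc 0 1) ∧
  ∀ r ∈ Icc (0:ℝ) 1,
    n₁ < n r ∧ n r < n₂ ∧
    derivWithin σ (Icc 0 1) r ≤ 0 ∧
    M₁ ≤ n r ^ 2 / σ r ∧ n r ^ 2 / σ r ≤ M₂ ∧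
    2 * derivWithin (derivWithin σ (Icc 0 1)) (Icc 0 1) r * σ r
      ≤ (derivWithin σ (Icc 0 1) r) ^ 2



def besselCoef (m s : ℕ) : ℝ :=
  (-1 : ℝ) ^ s / ((s.factorial : ℝ) * ((m + s).factorial : ℝ)) * (1/2 : ℝ) ^ (2*s+m)

def bF (m : ℕ) (x : ℝ) : ℝ := ∑' s : ℕ, besselCoef m s * x ^ (2*s+m)
def bF1 (m : ℕ) (x : ℝ) : ℝ :=
  ∑' s : ℕ, besselCoef m s * ((2*s+m : ℕ) : ℝ) * x ^ (2*s+m-1)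
def bF2 (m : ℕ) (x : ℝ) : ℝ :=
  ∑' s : ℕ, besselCoef m s * ((2*s+m : ℕ) : ℝ) * ((2*s+m-1 : ℕ) : ℝ) * x ^ (2*s+m-2)

lemma besselCoef_abs_le (m s : ℕ) : |besselCoef m s| ≤ 1 / (s.factorial : ℝ) := by
  unfold besselCoef
  rw [abs_mul, abs_div, abs_pow, abs_pow, abs_neg, abs_one, one_pow]
  have h1 : (0:ℝ) < (s.factorial : ℝ) := by positivity
  have h2 : (1:ℝ) ≤ ((m+s).factorial : ℝ) := by exact_mod_cast (m+s).factorial_pos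
  have : |(1/2 : ℝ)| ^ (2*s+m) ≤ 1 := by
    apply pow_le_one₀ (abs_nonneg _); rw [abs_of_pos]; norm_num; norm_num
  calc 1 / |(s.factorial : ℝ) * ((m + s).factorial : ℝ)| * |(1/2:ℝ)| ^ (2*s+m)
      ≤ 1 / |(s.factorial : ℝ) * ((m + s).factorial : ℝ)| * 1 := by
        apply mul_le_mul_of_nonneg_left this; positivity
    _ ≤ 1 / (s.factorial : ℝ) := by
        rw [mul_one, abs_of_pos (by positivity)]
        apply div_le_div_of_nonneg_left (by norm_num) h1
        nlinarith

lemma besselU_summable (m : ℕ) (R : ℝ) :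
    Summable (fun s : ℕ => (4*R) ^ (2*s+m) / (s.factorial : ℝ)) := by
  have := (Real.summable_pow_div_factorial ((4*R)^2)).mul_left ((4*R)^m)
  apply this.congr
  intro s
  rw [← mul_div_assoc, ← pow_mul, ← pow_add]
  ring_nf

lemma sq_le_four_pow (n : ℕ) : ((n : ℝ))^2 ≤ 4 ^ n := by
  have h : (n : ℝ) ≤ 2 ^ n := by exact_mod_cast (Nat.lt_two_pow_self (n := n)).le
  calc ((n:ℝ))^2 ≤ ((2:ℝ)^n)^2 := by
        apply pow_le_pow_left₀ (Nat.cast_nonneg n) h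
    _ = 4 ^ n := by rw [← pow_mul, pow_mul']; norm_num

lemma besselTermBound (m : ℕ) (R x : ℝ) (hR : 1 ≤ R) (hx : |x| ≤ R)
    (s e : ℕ) (he : e ≤ 2*s+m) (c : ℝ) (hc : |c| ≤ ((2*s+m : ℕ) : ℝ)^2) :
    |besselCoef m s * c * x ^ e| ≤ (4*R) ^ (2*s+m) / (s.factorial : ℝ) := by
  have hR0 : (0:ℝ) ≤ R := le_trans zero_le_one hR
  rw [abs_mul, abs_mul, abs_pow]
  have h1 : |x| ^ e ≤ R ^ (2*s+m) := by
    calc |x| ^ e ≤ R ^ e := pow_le_pow_left₀ (abs_nonneg x) hx e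
      _ ≤ R ^ (2*s+m) := pow_le_pow_right₀ hR he
  have h2 : |besselCoef m s| * |c| ≤ 4 ^ (2*s+m) / (s.factorial : ℝ) := by
    have := mul_le_mul (besselCoef_abs_le m s) (hc.trans (sq_le_four_pow (2*s+m)))
      (abs_nonneg c) (by positivity)
    calc |besselCoef m s| * |c| ≤ 1 / (s.factorial : ℝ) * 4 ^ (2*s+m) := this
      _ = 4 ^ (2*s+m) / (s.factorial : ℝ) := by ring
  calc |besselCoef m s| * |c| * |x| ^ e
      ≤ (4 ^ (2*s+m) / (s.factorial : ℝ)) * R ^ (2*s+m) := by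
        apply mul_le_mul h2 h1 (by positivity) (by positivity)
    _ = (4*R) ^ (2*s+m) / (s.factorial : ℝ) := by rw [mul_pow]; ring

lemma coefBound0 (m s : ℕ) : |(1:ℝ)| ≤ ((2*s+m : ℕ) : ℝ)^2 → True := fun _ => trivial

lemma bF_hasDerivAt (m : ℕ) (hm : 1 ≤ m) (y : ℝ) :
    HasDerivAt (bF m) (bF1 m y) y := by
  set R : ℝ := |y| + 1 with hRdef
  have hR : 1 ≤ R := by have := abs_nonneg y; simp only [hRdef]; linarith
  have hyR : y ∈ Ioo (-R) R := by
    have h1 : -|y| ≤ y := neg_abs_le y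
    have h2 : y ≤ |y| := le_abs_self y
    constructor <;> simp only [hRdef] <;> linarith
  have hc1 : ∀ s : ℕ, (1:ℝ) ≤ ((2*s+m : ℕ) : ℝ) := by
    intro s
    have : 1 ≤ 2*s+m := le_add_of_nonneg_of_le (Nat.zero_le _) hm
    exact_mod_cast this
  have hu := besselU_summable m R
  have hg : ∀ (s : ℕ) (x : ℝ), x ∈ Ioo (-R) R →
      HasDerivAt (fun z => besselCoef m s * z ^ (2*s+m))
        (besselCoef m s * ((2*s+m : ℕ) : ℝ) * x ^ (2*s+m-1)) x := by
    intro s x _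
    have := (hasDerivAt_pow (2*s+m) x).const_mul (besselCoef m s)
    exact this.congr_deriv (by push_cast; ring)
  have hbd : ∀ (s : ℕ) (x : ℝ), x ∈ Ioo (-R) R →
      ‖besselCoef m s * ((2*s+m : ℕ) : ℝ) * x ^ (2*s+m-1)‖
        ≤ (4*R) ^ (2*s+m) / (s.factorial : ℝ) := by
    intro s x hx
    rw [Real.norm_eq_abs]
    refine besselTermBound m R x hR (abs_lt.2 ⟨hx.1, hx.2⟩).le s _ (Nat.sub_le _ _) _ ?_
    rw [abs_of_nonneg (by positivity)]
    nlinarith [hc1 s]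
  have hg0 : Summable (fun s => besselCoef m s * y ^ (2*s+m)) := by
    apply Summable.of_norm_bounded hu
    intro s
    rw [Real.norm_eq_abs]
    have := besselTermBound m R y hR (abs_lt.2 ⟨hyR.1, hyR.2⟩).le s (2*s+m) le_rfl 1
      (by rw [abs_one]; nlinarith [hc1 s])
    simpa using this
  have := hasDerivAt_tsum_of_isPreconnected hu isOpen_Ioo (convex_Ioo _ _).isPreconnected
    hg hbd hyR hg0 hyR
  exact this


lemma bF1_hasDerivAt (m : ℕ) (hm : 1 ≤ m) (y : ℝ) :
    HasDerivAt (bF1 m) (bF2 m y) y := by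
  set R : ℝ := |y| + 1 with hRdef
  have hR : 1 ≤ R := by have := abs_nonneg y; simp only [hRdef]; linarith
  have hyR : y ∈ Ioo (-R) R := by
    have h1 : -|y| ≤ y := neg_abs_le y
    have h2 : y ≤ |y| := le_abs_self y
    constructor <;> simp only [hRdef] <;> linarith
  have hcast : ∀ s : ℕ, ((2*s+m-1 : ℕ) : ℝ) ≤ ((2*s+m : ℕ) : ℝ) := by
    intro s; exact_mod_cast Nat.sub_le _ _
  have hcast0 : ∀ s : ℕ, (0:ℝ) ≤ ((2*s+m-1 : ℕ) : ℝ) := fun s => Nat.cast_nonneg _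
  have hu := besselU_summable m R
  have hg : ∀ (s : ℕ) (x : ℝ), x ∈ Ioo (-R) R →
      HasDerivAt (fun z => besselCoef m s * ((2*s+m : ℕ) : ℝ) * z ^ (2*s+m-1))
        (besselCoef m s * ((2*s+m : ℕ) : ℝ) * ((2*s+m-1 : ℕ) : ℝ) * x ^ (2*s+m-2)) x := by
    intro s x _
    have := (hasDerivAt_pow (2*s+m-1) x).const_mul (besselCoef m s * ((2*s+m : ℕ) : ℝ))
    have h2 : 2*s+m-1-1 = 2*s+m-2 := by omega
    rw [h2] at this
    exact this.congr_deriv (by ring)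
  have hbd : ∀ (s : ℕ) (x : ℝ), x ∈ Ioo (-R) R →
      ‖besselCoef m s * ((2*s+m : ℕ) : ℝ) * ((2*s+m-1 : ℕ) : ℝ) * x ^ (2*s+m-2)‖
        ≤ (4*R) ^ (2*s+m) / (s.factorial : ℝ) := by
    intro s x hx
    rw [Real.norm_eq_abs]
    have h := besselTermBound m R x hR (abs_lt.2 ⟨hx.1, hx.2⟩).le s (2*s+m-2)
      (Nat.sub_le _ _) (((2*s+m : ℕ) : ℝ) * ((2*s+m-1 : ℕ) : ℝ)) ?_
    · convert h using 2
      ring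
    · rw [abs_of_nonneg (by positivity)]
      have := hcast s
      nlinarith [hcast0 s, Nat.cast_nonneg (α := ℝ) (2*s+m)]
  have hg0 : Summable (fun s => besselCoef m s * ((2*s+m : ℕ) : ℝ) * y ^ (2*s+m-1)) := by
    apply Summable.of_norm_bounded hu
    intro s
    rw [Real.norm_eq_abs]
    refine besselTermBound m R y hR (abs_lt.2 ⟨hyR.1, hyR.2⟩).le s _ (Nat.sub_le _ _) _ ?_
    rw [abs_of_nonneg (Nat.cast_nonneg _)]
    have h1 : (1:ℝ) ≤ ((2*s+m : ℕ) : ℝ) := by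
      have : 1 ≤ 2*s+m := le_add_of_nonneg_of_le (Nat.zero_le _) hm
      exact_mod_cast this
    nlinarith
  have := hasDerivAt_tsum_of_isPreconnected hu isOpen_Ioo (convex_Ioo _ _).isPreconnected
    hg hbd hyR hg0 hyR
  exact this

lemma summable_bessel_term (m : ℕ) (x : ℝ) (e : ℕ → ℕ) (he : ∀ s, e s ≤ 2*s+m)
    (c : ℕ → ℝ) (hc : ∀ s, |c s| ≤ ((2*s+m : ℕ) : ℝ)^2) :
    Summable (fun s => besselCoef m s * c s * x ^ (e s)) := by
  set R : ℝ := |x| + 1 with hRdef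
  have hR : 1 ≤ R := by have := abs_nonneg x; simp only [hRdef]; linarith
  have hxR : |x| ≤ R := by simp only [hRdef]; linarith
  apply Summable.of_norm_bounded (besselU_summable m R)
  intro s
  rw [Real.norm_eq_abs]
  exact besselTermBound m R x hR hxR s (e s) (he s) (c s) (hc s)

lemma bessel_ode (m : ℕ) (hm : 1 ≤ m) (x : ℝ) :
    x^2 * bF2 m x + x * bF1 m x + (x^2 - (m:ℝ)^2) * bF m x = 0 := by
  have hn1 : ∀ s : ℕ, (1:ℝ) ≤ ((2*s+m : ℕ) : ℝ) := by
    intro s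
    have : 1 ≤ 2*s+m := le_add_of_nonneg_of_le (Nat.zero_le _) hm
    exact_mod_cast this
  have hnn : ∀ s : ℕ, ((2*s+m-1 : ℕ) : ℝ) ≤ ((2*s+m : ℕ) : ℝ) := by
    intro s; exact_mod_cast Nat.sub_le _ _
  -- summability of the three series and of P, H
  have S0 : Summable (fun s => besselCoef m s * x ^ (2*s+m)) := by
    have := summable_bessel_term m x (fun s => 2*s+m) (fun s => le_rfl) (fun _ => 1)
      (fun s => by rw [abs_one]; nlinarith [hn1 s])
    apply this.congr; intro s; ring
  have S1 : Summable (fun s => besselCoef m s * ((2*s+m : ℕ) : ℝ) * x ^ (2*s+m-1)) :=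
    summable_bessel_term m x (fun s => 2*s+m-1) (fun s => Nat.sub_le _ _)
      (fun s => ((2*s+m : ℕ) : ℝ)) (fun s => by
        rw [abs_of_nonneg (Nat.cast_nonneg _)]; nlinarith [hn1 s])
  have S2 : Summable (fun s => besselCoef m s * ((2*s+m : ℕ) : ℝ) * ((2*s+m-1 : ℕ) : ℝ)
      * x ^ (2*s+m-2)) := by
    have := summable_bessel_term m x (fun s => 2*s+m-2) (fun s => Nat.sub_le _ _)
      (fun s => ((2*s+m : ℕ) : ℝ) * ((2*s+m-1 : ℕ) : ℝ)) (fun s => by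
        rw [abs_of_nonneg (by positivity)]
        have h := mul_le_mul_of_nonneg_left (hnn s) (le_trans zero_le_one (hn1 s))
        simpa [sq] using h)
    apply this.congr; intro s; ring
  have SP : Summable (fun s : ℕ => 4*(s:ℝ)*((s:ℝ)+m) * besselCoef m s * x ^ (2*s+m)) := by
    have := summable_bessel_term m x (fun s => 2*s+m) (fun s => le_rfl)
      (fun s => 4*(s:ℝ)*((s:ℝ)+m)) (fun s => by
        rw [abs_of_nonneg (by positivity)]
        have hs : (0:ℝ) ≤ (s:ℝ) := Nat.cast_nonneg s
        have hmm : (0:ℝ) ≤ (m:ℝ) := Nat.cast_nonneg m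
        push_cast
        nlinarith)
    apply this.congr; intro s; ring
  have SH : Summable (fun s => besselCoef m s * x ^ (2*s+m+2)) := by
    set R : ℝ := |x| + 1 with hRdef
    have hR : 1 ≤ R := by have := abs_nonneg x; simp only [hRdef]; linarith
    have hxR : |x| ≤ R := by simp only [hRdef]; linarith
    apply Summable.of_norm_bounded ((besselU_summable m R).mul_left (R^2))
    intro s
    rw [Real.norm_eq_abs, abs_mul, abs_pow]
    have h1 : |besselCoef m s| ≤ 1 / (s.factorial : ℝ) := besselCoef_abs_le m s
    have h2 : |x| ^ (2*s+m+2) ≤ R^2 * R ^ (2*s+m) := by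
      rw [show 2*s+m+2 = 2+(2*s+m) by omega, pow_add]
      apply mul_le_mul (pow_le_pow_left₀ (abs_nonneg x) hxR 2)
        (pow_le_pow_left₀ (abs_nonneg x) hxR _) (by positivity) (by positivity)
    calc |besselCoef m s| * |x| ^ (2*s+m+2)
        ≤ (1 / (s.factorial : ℝ)) * (R^2 * R ^ (2*s+m)) :=
          mul_le_mul h1 h2 (by positivity) (by positivity)
      _ = R^2 * (R ^ (2*s+m) / (s.factorial : ℝ)) := by ring
      _ ≤ R^2 * ((4*R) ^ (2*s+m) / (s.factorial : ℝ)) := by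
          have h4 : R ^ (2*s+m) ≤ (4*R) ^ (2*s+m) :=
            pow_le_pow_left₀ (by positivity) (by linarith) _
          gcongr
  -- now the main computation
  have hrec : ∀ s : ℕ, 4*((s:ℝ)+1)*((s:ℝ)+1+m) * besselCoef m (s+1) = - besselCoef m s := by
    intro s
    unfold besselCoef
    have e1 : (s+1).factorial = (s+1) * s.factorial := Nat.factorial_succ s
    have e2 : (m+(s+1)).factorial = (m+s+1) * (m+s).factorial := by
      rw [show m+(s+1) = (m+s)+1 by ring, Nat.factorial_succ]
    rw [e1, e2, show 2*(s+1)+m = (2*s+m)+2 by ring, pow_add,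
        show s+1 = s+1 from rfl]
    have f1 : ((s.factorial : ℕ) : ℝ) ≠ 0 := Nat.cast_ne_zero.mpr s.factorial_ne_zero
    have f2 : (((m+s).factorial : ℕ) : ℝ) ≠ 0 := Nat.cast_ne_zero.mpr (m+s).factorial_ne_zero
    have f3 : ((s:ℝ)+1) ≠ 0 := by positivity
    have f4 : ((m:ℝ)+(s:ℝ)+1) ≠ 0 := by positivity
    push_cast
    field_simp
    ring
  have key : ∀ s : ℕ,
      x^2 * (besselCoef m s * ((2*s+m : ℕ) : ℝ) * ((2*s+m-1 : ℕ) : ℝ) * x ^ (2*s+m-2))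
      + x * (besselCoef m s * ((2*s+m : ℕ) : ℝ) * x ^ (2*s+m-1))
      + (x^2 - (m:ℝ)^2) * (besselCoef m s * x ^ (2*s+m))
      = 4*(s:ℝ)*((s:ℝ)+m) * besselCoef m s * x ^ (2*s+m)
        + besselCoef m s * x ^ (2*s+m+2) := by
    intro s
    have hp1 : (((2*s+m-1 : ℕ)) : ℝ) * (x^2 * x ^ (2*s+m-2))
        = (((2*s+m : ℕ) : ℝ) - 1) * x ^ (2*s+m) := by
      rcases Nat.lt_or_ge (2*s+m) 2 with h | h
      · have h1 : 2*s+m = 1 := by omega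
        have h2 : 2*s+m-1 = 0 := by omega
        have h3 : 2*s+m-2 = 0 := by omega
        rw [h2, h3, h1]; norm_num
      · have hc : ((2*s+m-1 : ℕ) : ℝ) = ((2*s+m : ℕ) : ℝ) - 1 := by
          rw [Nat.cast_sub (by omega), Nat.cast_one]
        rw [hc, ← pow_add, show 2+(2*s+m-2) = 2*s+m by omega]
    have hp2 : x * x ^ (2*s+m-1) = x ^ (2*s+m) := by
      rw [← pow_succ', show (2*s+m-1)+1 = 2*s+m by omega]
    have hp3 : x^2 * x ^ (2*s+m) = x ^ (2*s+m+2) := by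
      rw [← pow_add, show 2+(2*s+m) = 2*s+m+2 by omega]
    calc x^2 * (besselCoef m s * ((2*s+m : ℕ) : ℝ) * ((2*s+m-1 : ℕ) : ℝ) * x ^ (2*s+m-2))
        + x * (besselCoef m s * ((2*s+m : ℕ) : ℝ) * x ^ (2*s+m-1))
        + (x^2 - (m:ℝ)^2) * (besselCoef m s * x ^ (2*s+m))
        = besselCoef m s * ((2*s+m : ℕ) : ℝ) * (((2*s+m-1 : ℕ) : ℝ) * (x^2 * x ^ (2*s+m-2)))
          + besselCoef m s * ((2*s+m : ℕ) : ℝ) * (x * x ^ (2*s+m-1))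
          + besselCoef m s * (x^2 * x ^ (2*s+m))
          - (m:ℝ)^2 * (besselCoef m s * x ^ (2*s+m)) := by ring
      _ = besselCoef m s * ((2*s+m : ℕ) : ℝ) * ((((2*s+m : ℕ) : ℝ) - 1) * x ^ (2*s+m))
          + besselCoef m s * ((2*s+m : ℕ) : ℝ) * x ^ (2*s+m)
          + besselCoef m s * x ^ (2*s+m+2)
          - (m:ℝ)^2 * (besselCoef m s * x ^ (2*s+m)) := by rw [hp1, hp2, hp3]
      _ = 4*(s:ℝ)*((s:ℝ)+m) * besselCoef m s * x ^ (2*s+m)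
          + besselCoef m s * x ^ (2*s+m+2) := by push_cast; ring
  have S2' := S2.mul_left (x^2)
  have S1' := S1.mul_left x
  have S0' := S0.mul_left (x^2 - (m:ℝ)^2)
  have hsum : x^2 * bF2 m x + x * bF1 m x + (x^2 - (m:ℝ)^2) * bF m x
      = ∑' s : ℕ, (4*(s:ℝ)*((s:ℝ)+m) * besselCoef m s * x ^ (2*s+m)
        + besselCoef m s * x ^ (2*s+m+2)) := by
    rw [bF2, bF1, bF, ← tsum_mul_left, ← tsum_mul_left, ← tsum_mul_left,
        ← Summable.tsum_add S2' S1', ← Summable.tsum_add (S2'.add S1') S0']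
    exact tsum_congr key
  rw [hsum, Summable.tsum_add SP SH, SP.tsum_eq_zero_add]
  have h0 : 4*((0:ℕ):ℝ)*(((0:ℕ):ℝ)+m) * besselCoef m 0 * x ^ (2*0+m) = 0 := by
    norm_num
  have hshift : ∀ s : ℕ,
      4*(((s+1 : ℕ)):ℝ)*((((s+1 : ℕ)):ℝ)+m) * besselCoef m (s+1) * x ^ (2*(s+1)+m)
      = - (besselCoef m s * x ^ (2*s+m+2)) := by
    intro s
    rw [show 2*(s+1)+m = 2*s+m+2 by ring]
    push_cast
    linear_combination x ^ (2*s+m+2) * hrec s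
  rw [h0, zero_add, tsum_congr hshift, tsum_neg]
  ring

lemma besselJ_eq (m : ℕ) (x : ℝ) : besselJ (m : ℝ) x = bF m x := by
  unfold besselJ bF
  apply tsum_congr
  intro s
  have h1 : ((m:ℝ) + (s:ℝ) + 1) = ((m+s : ℕ) : ℝ) + 1 := by push_cast; ring
  rw [h1, Real.Gamma_nat_eq_factorial]
  have h2 : (2*(s:ℝ) + (m:ℝ)) = ((2*s+m : ℕ) : ℝ) := by push_cast; ring
  rw [h2, Real.rpow_natCast]
  unfold besselCoef
  rw [div_pow, div_pow, one_pow]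
  ring

def bXi (m : ℕ) (c r : ℝ) : ℝ := Real.sqrt r * bF m (c*r)
def bXi1 (m : ℕ) (c r : ℝ) : ℝ :=
  1/(2*Real.sqrt r) * bF m (c*r) + Real.sqrt r * (bF1 m (c*r) * c)

lemma comp_linear_hasDerivAt {g g' : ℝ → ℝ} (c r : ℝ)
    (h : ∀ y : ℝ, HasDerivAt g (g' y) y) :
    HasDerivAt (fun t => g (c*t)) (g' (c*r) * c) r := by
  have h2 : HasDerivAt (fun t : ℝ => c*t) c r := by
    simpa using (hasDerivAt_id r).const_mul c
  exact (h (c*r)).comp r h2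

lemma bXi_hasDerivAt (m : ℕ) (hm : 1 ≤ m) (c : ℝ) (r : ℝ) (hr : 0 < r) :
    HasDerivAt (bXi m c) (bXi1 m c r) r := by
  have h1 : HasDerivAt Real.sqrt (1/(2*Real.sqrt r)) r := Real.hasDerivAt_sqrt hr.ne'
  have h2 : HasDerivAt (fun t => bF m (c*t)) (bF1 m (c*r) * c) r :=
    comp_linear_hasDerivAt c r (bF_hasDerivAt m hm)
  exact h1.mul h2

lemma bXi1_hasDerivAt (m : ℕ) (hm : 1 ≤ m) (c : ℝ) (r : ℝ) (hr : 0 < r) :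
    HasDerivAt (bXi1 m c) (-(c^2 - ((m:ℝ)^2 - 1/4)/r^2) * bXi m c r) r := by
  have hS : 0 < Real.sqrt r := Real.sqrt_pos.mpr hr
  have h1 : HasDerivAt Real.sqrt (1/(2*Real.sqrt r)) r := Real.hasDerivAt_sqrt hr.ne'
  have h2 : HasDerivAt (fun t => bF m (c*t)) (bF1 m (c*r) * c) r :=
    comp_linear_hasDerivAt c r (bF_hasDerivAt m hm)
  have h3 : HasDerivAt (fun t => bF1 m (c*t)) (bF2 m (c*r) * c) r :=
    comp_linear_hasDerivAt c r (bF1_hasDerivAt m hm)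
  have h4 : HasDerivAt (fun t => 1/(2*Real.sqrt t))
      (-(2*(1/(2*Real.sqrt r)))/(2*Real.sqrt r)^2) r := by
    have := ((h1.const_mul 2).inv (by positivity))
    exact this.congr_of_eventuallyEq (Filter.Eventually.of_forall fun t => by simp [one_div])
  have h5 := (h4.mul h2).add (h1.mul (h3.mul_const c))
  have h6 : HasDerivAt (bXi1 m c)
      ((-(2*(1/(2*Real.sqrt r)))/(2*Real.sqrt r)^2) * bF m (c*r)
        + 1/(2*Real.sqrt r) * (bF1 m (c*r) * c)
        + (1/(2*Real.sqrt r) * (bF1 m (c*r) * c)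
          + Real.sqrt r * (bF2 m (c*r) * c * c))) r := by
    exact h5
  have hode := bessel_ode m hm (c*r)
  set S := Real.sqrt r with hSdef
  have hS2 : S^2 = r := Real.sq_sqrt hr.le
  have hS0 : S ≠ 0 := ne_of_gt hS
  convert h6 using 1
  unfold bXi
  rw [← hSdef]
  rw [← hS2] at hode ⊢
  field_simp
  linear_combination (-16) * hode

lemma sturm_core (a b : ℝ) (hab : a < b)
    (xi xi' ψ ψ' q Q : ℝ → ℝ)
    (hxi : ∀ r ∈ Icc a b, HasDerivAt xi (xi' r) r)
    (hxi' : ∀ r ∈ Icc a b, HasDerivAt xi' (-Q r * xi r) r)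
    (hψ : ∀ r ∈ Icc a b, HasDerivWithinAt ψ (ψ' r) (Icc a b) r)
    (hψ' : ∀ r ∈ Icc a b, HasDerivWithinAt ψ' (-q r * ψ r) (Icc a b) r)
    (hqQ : ∀ r ∈ Ioo a b, Q r ≤ q r)
    (hxia : xi a = 0) (hxib : xi b = 0)
    (hxipos : ∀ r ∈ Ioo a b, 0 < xi r)
    (hψpos : ∀ r ∈ Icc a b, 0 < ψ r) : False := by
  have hmem_a : a ∈ Icc a b := ⟨le_refl a, hab.le⟩
  have hmem_b : b ∈ Icc a b := ⟨hab.le, le_refl b⟩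
  set W : ℝ → ℝ := fun r => xi' r * ψ r - xi r * ψ' r with hWdef
  have hWd : ∀ r ∈ Icc a b, HasDerivWithinAt W ((q r - Q r) * (xi r * ψ r)) (Icc a b) r := by
    intro r hr
    have h := ((hxi' r hr).hasDerivWithinAt.mul (hψ r hr)).sub
      ((hxi r hr).hasDerivWithinAt.mul (hψ' r hr))
    exact h.congr_deriv (by ring)
  have hWc : ContinuousOn W (Icc a b) := fun r hr => (hWd r hr).continuousWithinAt
  have hWmono : MonotoneOn W (Icc a b) := by
    apply monotoneOn_of_hasDerivWithinAt_nonneg (convex_Icc a b) hWc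
      (f' := fun r => (q r - Q r) * (xi r * ψ r))
    · intro r hr
      rw [interior_Icc] at hr
      rw [interior_Icc]
      exact (hWd r (Ioo_subset_Icc_self hr)).mono Ioo_subset_Icc_self
    · intro r hr
      rw [interior_Icc] at hr
      have h1 := hqQ r hr
      have h2 := hxipos r hr
      have h3 := hψpos r (Ioo_subset_Icc_self hr)
      have := mul_nonneg (sub_nonneg.2 h1) (mul_nonneg h2.le h3.le)
      exact this
  have hxia' : 0 ≤ xi' a := by
    have h := ((hxi a hmem_a).hasDerivWithinAt (s := Ioi a))
    rw [hasDerivWithinAt_iff_tendsto_slope] at h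
    rw [Set.diff_singleton_eq_self (by simp)] at h
    refine ge_of_tendsto h ?_
    filter_upwards [Ioo_mem_nhdsGT hab] with y hy
    rw [slope_def_field, hxia, sub_zero]
    exact div_nonneg (hxipos y hy).le (by linarith [hy.1])
  have hxib' : xi' b ≤ 0 := by
    have h := ((hxi b hmem_b).hasDerivWithinAt (s := Iio b))
    rw [hasDerivWithinAt_iff_tendsto_slope] at h
    rw [Set.diff_singleton_eq_self (by simp)] at h
    refine le_of_tendsto h ?_
    filter_upwards [Ioo_mem_nhdsLT hab] with y hy
    rw [slope_def_field, hxib, sub_zero]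
    exact div_nonpos_of_nonneg_of_nonpos (hxipos y hy).le (by linarith [hy.2])
  have hWa : 0 ≤ W a := by
    have : W a = xi' a * ψ a := by simp [hWdef, hxia]
    rw [this]
    exact mul_nonneg hxia' (hψpos a hmem_a).le
  have hWb : W b ≤ 0 := by
    have : W b = xi' b * ψ b := by simp [hWdef, hxib]
    rw [this]
    exact mul_nonpos_of_nonpos_of_nonneg hxib' (hψpos b hmem_b).le
  have hW0 : ∀ r ∈ Icc a b, W r = 0 := by
    intro r hr
    have h1 : W a ≤ W r := hWmono hmem_a hr hr.1
    have h2 : W r ≤ W b := hWmono hr hmem_b hr.2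
    linarith
  set g : ℝ → ℝ := fun r => xi r / ψ r with hgdef
  have hgd : ∀ r ∈ Icc a b, HasDerivWithinAt g 0 (Icc a b) r := by
    intro r hr
    have h := ((hxi r hr).hasDerivWithinAt.div (hψ r hr) (ne_of_gt (hψpos r hr)))
    have he : (xi' r * ψ r - xi r * ψ' r) / (ψ r)^2 = 0 := by
      rw [show xi' r * ψ r - xi r * ψ' r = W r from rfl, hW0 r hr, zero_div]
    rwa [he] at h
  have hconst := constant_of_has_deriv_right_zero
    (f := g) (a := a) (b := b)
    (fun r hr => (hgd r hr).continuousWithinAt) ?_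
  · have hr0 : (a+b)/2 ∈ Ioo a b := ⟨by linarith, by linarith⟩
    have h1 := hconst ((a+b)/2) (Ioo_subset_Icc_self hr0)
    have hga : g a = 0 := by simp [hgdef, hxia]
    rw [hga] at h1
    have h2 : xi ((a+b)/2) = 0 := by
      have := hψpos ((a+b)/2) (Ioo_subset_Icc_self hr0)
      simp only [hgdef] at h1
      exact (div_eq_zero_iff.mp h1).resolve_right this.ne'
    exact absurd h2 (ne_of_gt (hxipos _ hr0))
  · intro x hx
    apply (hgd x (Ico_subset_Icc_self hx)).mono_of_mem_nhdsWithin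
    apply mem_nhdsWithin.mpr
    refine ⟨Iio b, isOpen_Iio, hx.2, ?_⟩
    rintro y ⟨hy1, hy2⟩
    exact ⟨le_trans hx.1 hy2, le_of_lt hy1⟩

lemma sign_const_Icc {f : ℝ → ℝ} {a b : ℝ} (hf : ContinuousOn f (Icc a b))
    (hne : ∀ r ∈ Icc a b, f r ≠ 0) (h0 : 0 < f a) :
    ∀ r ∈ Icc a b, 0 < f r := by
  intro r hr
  rcases (hne r hr).lt_or_gt with h | h
  · exfalso
    have hcont : ContinuousOn f (Icc a r) := hf.mono (Icc_subset_Icc le_rfl hr.2)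
    obtain ⟨x, hx, hfx⟩ := intermediate_value_Icc' hr.1 hcont
      (⟨h.le, h0.le⟩ : (0:ℝ) ∈ Icc (f r) (f a))
    exact hne x ⟨hx.1, le_trans hx.2 hr.2⟩ hfx
  · exact h

lemma sign_const_Ioo {f : ℝ → ℝ} {a b : ℝ} (hf : ∀ x ∈ Ioo a b, ContinuousAt f x)
    (hne : ∀ r ∈ Ioo a b, f r ≠ 0) (m0 : ℝ) (hm0 : m0 ∈ Ioo a b) (h0 : 0 < f m0) :
    ∀ r ∈ Ioo a b, 0 < f r := by
  intro r hr
  rcases (hne r hr).lt_or_gt with h | h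
  · exfalso
    rcases le_or_gt r m0 with hrm | hrm
    · have hss : Icc r m0 ⊆ Ioo a b := fun y hy =>
        ⟨lt_of_lt_of_le hr.1 hy.1, lt_of_le_of_lt hy.2 hm0.2⟩
      have hcont : ContinuousOn f (Icc r m0) := fun y hy => (hf y (hss hy)).continuousWithinAt
      obtain ⟨x, hx, hfx⟩ := intermediate_value_Icc hrm hcont
        (⟨h.le, h0.le⟩ : (0:ℝ) ∈ Icc (f r) (f m0))
      exact hne x (hss hx) hfx
    · have hss : Icc m0 r ⊆ Ioo a b := fun y hy =>
        ⟨lt_of_lt_of_le hm0.1 hy.1, lt_of_le_of_lt hy.2 hr.2⟩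
      have hcont : ContinuousOn f (Icc m0 r) := fun y hy => (hf y (hss hy)).continuousWithinAt
      obtain ⟨x, hx, hfx⟩ := intermediate_value_Icc' hrm.le hcont
        (⟨h.le, h0.le⟩ : (0:ℝ) ∈ Icc (f r) (f m0))
      exact hne x (hss hx) hfx
  · exact h

/-- Sturm comparison in two dimensions: between two consecutive zeros of
`r ↦ J_m(k√M₁·r)` in `(0,1]`, a nontrivial solution `ψ` of
`ψ'' + [k²n²/σ + σ'²/(4σ²) − σ''/(2σ) − σ'/(2σr) − (m² − 1/4)/r²]ψ = 0`
has at least one zero. -/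
theorem sturm_comparison_2d
    (n σ : ℝ → ℝ) (n₁ n₂ M₁ M₂ : ℝ) (hA : AssumptionA n σ n₁ n₂ M₁ M₂)
    (m : ℕ) (hm : 1 ≤ m) (k : ℝ) (hk : 0 < k)
    (ψ : ℝ → ℝ)
    (hψ : ∀ r ∈ Ioc (0:ℝ) 1,
      DifferentiableWithinAt ℝ ψ (Ioc 0 1) r ∧
      DifferentiableWithinAt ℝ (derivWithin ψ (Ioc 0 1)) (Ioc 0 1) r)
    (hψne : ¬ ∀ r ∈ Ioc (0:ℝ) 1, ψ r = 0)
    (hode : ∀ r ∈ Ioc (0:ℝ) 1,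
      derivWithin (derivWithin ψ (Ioc 0 1)) (Ioc 0 1) r
        + (k ^ 2 * n r ^ 2 / σ r
            + (derivWithin σ (Icc 0 1) r) ^ 2 / (4 * σ r ^ 2)
            - derivWithin (derivWithin σ (Icc 0 1)) (Icc 0 1) r / (2 * σ r)
            - derivWithin σ (Icc 0 1) r / (2 * σ r * r)
            - ((m : ℝ) ^ 2 - 1 / 4) / r ^ 2) * ψ r = 0)
    (a b : ℝ) (ha : 0 < a) (hab : a < b) (hb : b ≤ 1)
    (hJa : besselJ m (k * Real.sqrt M₁ * a) = 0)
    (hJb : besselJ m (k * Real.sqrt M₁ * b) = 0)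
    (hJ : ∀ r ∈ Ioo a b, besselJ m (k * Real.sqrt M₁ * r) ≠ 0) :
    ∃ r ∈ Icc a b, ψ r = 0 := by
  by_contra hcon
  push_neg at hcon
  obtain ⟨hn₁, hn₁₂, hM₁, hM₁₂, hncont, hσcont, hpt⟩ := hA
  set c : ℝ := k * Real.sqrt M₁ with hcdef
  have hM₁0 : (0:ℝ) < M₁ := by linarith
  have hc : 0 < c := mul_pos hk (Real.sqrt_pos.mpr hM₁0)
  have hc2 : c^2 = k^2 * M₁ := by
    rw [hcdef, mul_pow, Real.sq_sqrt hM₁0.le]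
  have hsub : Icc a b ⊆ Ioc (0:ℝ) 1 := fun r hr => ⟨lt_of_lt_of_le ha hr.1, le_trans hr.2 hb⟩
  have hsub' : Icc a b ⊆ Icc (0:ℝ) 1 := fun r hr =>
    ⟨(lt_of_lt_of_le ha hr.1).le, le_trans hr.2 hb⟩
  have hmem_a : a ∈ Icc a b := ⟨le_refl a, hab.le⟩
  have hσpos : ∀ r ∈ Icc (0:ℝ) 1, 0 < σ r := by
    intro r hr
    obtain ⟨h1, _, _, h4, _, _⟩ := hpt r hr
    rcases lt_trichotomy (σ r) 0 with h | h | h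
    · exfalso
      have hn0 : 0 < n r ^ 2 := by nlinarith
      have := div_neg_of_pos_of_neg hn0 h
      linarith
    · exfalso
      rw [h, div_zero] at h4
      linarith
    · exact h
  -- potentials
  set ψ' : ℝ → ℝ := derivWithin ψ (Ioc 0 1) with hψ'def
  set q : ℝ → ℝ := fun r => k ^ 2 * n r ^ 2 / σ r
      + (derivWithin σ (Icc 0 1) r) ^ 2 / (4 * σ r ^ 2)
      - derivWithin (derivWithin σ (Icc 0 1)) (Icc 0 1) r / (2 * σ r)
      - derivWithin σ (Icc 0 1) r / (2 * σ r * r)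
      - ((m : ℝ) ^ 2 - 1 / 4) / r ^ 2 with hqdef
  set Q : ℝ → ℝ := fun r => k^2 * M₁ - ((m : ℝ) ^ 2 - 1 / 4) / r ^ 2 with hQdef
  have hψd : ∀ r ∈ Icc a b, HasDerivWithinAt ψ (ψ' r) (Icc a b) r := fun r hr =>
    ((hψ r (hsub hr)).1.hasDerivWithinAt).mono hsub
  have hψd2 : ∀ r ∈ Icc a b, HasDerivWithinAt ψ' (-q r * ψ r) (Icc a b) r := by
    intro r hr
    have h := ((hψ r (hsub hr)).2.hasDerivWithinAt).mono hsub
    have heq : derivWithin (derivWithin ψ (Ioc 0 1)) (Ioc 0 1) r = -q r * ψ r := by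
      have h2 := hode r (hsub hr)
      rw [hqdef]
      linear_combination h2
    rw [← hψ'def] at heq
    rwa [heq] at h
  -- xi
  have hxid : ∀ r ∈ Icc a b, HasDerivAt (bXi m c) (bXi1 m c r) r := fun r hr =>
    bXi_hasDerivAt m hm c r (lt_of_lt_of_le ha hr.1)
  have hxid2 : ∀ r ∈ Icc a b, HasDerivAt (bXi1 m c) (-Q r * bXi m c r) r := by
    intro r hr
    have h := bXi1_hasDerivAt m hm c r (lt_of_lt_of_le ha hr.1)
    have heq : -(c^2 - ((m:ℝ)^2 - 1/4)/r^2) = -Q r := by rw [hQdef, hc2]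
    rwa [heq] at h
  have hxia : bXi m c a = 0 := by
    rw [bXi, ← besselJ_eq, hJa, mul_zero]
  have hxib : bXi m c b = 0 := by
    rw [bXi, ← besselJ_eq, hJb, mul_zero]
  have hxine : ∀ r ∈ Ioo a b, bXi m c r ≠ 0 := by
    intro r hr
    have h1 : Real.sqrt r ≠ 0 :=
      ne_of_gt (Real.sqrt_pos.mpr (lt_trans ha hr.1))
    have h2 : bF m (c*r) ≠ 0 := by rw [← besselJ_eq]; exact hJ r hr
    exact mul_ne_zero h1 h2
  have hxicont : ∀ x ∈ Ioo a b, ContinuousAt (bXi m c) x := fun x hx =>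
    (bXi_hasDerivAt m hm c x (lt_trans ha hx.1)).continuousAt
  -- comparison of potentials
  have hqQ : ∀ r ∈ Ioo a b, Q r ≤ q r := by
    intro r hr
    have hr01 : r ∈ Icc (0:ℝ) 1 := hsub' (Ioo_subset_Icc_self hr)
    have hr0 : 0 < r := lt_trans ha hr.1
    obtain ⟨h1, h2, h3, h4, h5, h6⟩ := hpt r hr01
    have hσ := hσpos r hr01
    have e1 : k^2 * M₁ ≤ k^2 * n r ^ 2 / σ r := by
      rw [mul_div_assoc]
      exact mul_le_mul_of_nonneg_left h4 (sq_nonneg k)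
    have e2 : derivWithin (derivWithin σ (Icc 0 1)) (Icc 0 1) r / (2 * σ r)
        ≤ (derivWithin σ (Icc 0 1) r) ^ 2 / (4 * σ r ^ 2) := by
      rw [div_le_div_iff₀ (by positivity) (by positivity)]
      nlinarith [h6, hσ]
    have e3 : derivWithin σ (Icc 0 1) r / (2 * σ r * r) ≤ 0 :=
      div_nonpos_of_nonpos_of_nonneg h3 (by positivity)
    rw [hqdef, hQdef]
    simp only []
    linarith
  -- sign of psi
  have hψcont : ContinuousOn ψ (Icc a b) := fun r hr => (hψd r hr).continuousWithinAt
  have hm0 : (a+b)/2 ∈ Ioo a b := ⟨by linarith, by linarith⟩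
  rcases (hcon a hmem_a).lt_or_gt with hψa | hψa
  · -- psi < 0 on Icc
    have hψneg : ∀ r ∈ Icc a b, 0 < -ψ r := by
      have := sign_const_Icc (f := fun r => -ψ r) (hψcont.neg)
        (fun r hr => neg_ne_zero.mpr (hcon r hr)) (by simpa using hψa)
      exact this
    rcases (hxine _ hm0).lt_or_gt with hxim | hxim
    · -- xi < 0 on Ioo : use -xi, -psi
      have hxneg : ∀ r ∈ Ioo a b, 0 < -bXi m c r :=
        sign_const_Ioo (f := fun r => -bXi m c r) (fun x hx => (hxicont x hx).neg)
          (fun r hr => neg_ne_zero.mpr (hxine r hr)) _ hm0 (by simpa using hxim)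
      exact sturm_core a b hab (fun r => -bXi m c r) (fun r => -bXi1 m c r)
        (fun r => -ψ r) (fun r => -ψ' r) q Q
        (fun r hr => (hxid r hr).neg)
        (fun r hr => by
          have := (hxid2 r hr).neg
          exact this.congr_deriv (by beta_reduce; ring))
        (fun r hr => (hψd r hr).neg)
        (fun r hr => by
          have := (hψd2 r hr).neg
          exact this.congr_deriv (by beta_reduce; ring))
        hqQ (by simp [hxia]) (by simp [hxib]) hxneg hψneg
    · -- xi > 0 on Ioo : use xi, -psi
      have hxpos : ∀ r ∈ Ioo a b, 0 < bXi m c r :=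
        sign_const_Ioo hxicont hxine _ hm0 hxim
      exact sturm_core a b hab (bXi m c) (bXi1 m c)
        (fun r => -ψ r) (fun r => -ψ' r) q Q
        hxid hxid2
        (fun r hr => (hψd r hr).neg)
        (fun r hr => by
          have := (hψd2 r hr).neg
          exact this.congr_deriv (by beta_reduce; ring))
        hqQ hxia hxib hxpos hψneg
  · -- psi > 0 on Icc
    have hψposI : ∀ r ∈ Icc a b, 0 < ψ r := sign_const_Icc hψcont hcon hψa
    rcases (hxine _ hm0).lt_or_gt with hxim | hxim
    · have hxneg : ∀ r ∈ Ioo a b, 0 < -bXi m c r :=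
        sign_const_Ioo (f := fun r => -bXi m c r) (fun x hx => (hxicont x hx).neg)
          (fun r hr => neg_ne_zero.mpr (hxine r hr)) _ hm0 (by simpa using hxim)
      exact sturm_core a b hab (fun r => -bXi m c r) (fun r => -bXi1 m c r)
        ψ ψ' q Q
        (fun r hr => (hxid r hr).neg)
        (fun r hr => by
          have := (hxid2 r hr).neg
          exact this.congr_deriv (by beta_reduce; ring))
        hψd hψd2
        hqQ (by simp [hxia]) (by simp [hxib]) hxneg hψposI
    · have hxpos : ∀ r ∈ Ioo a b, 0 < bXi m c r :=
        sign_const_Ioo hxicont hxine _ hm0 hxim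
      exact sturm_core a b hab (bXi m c) (bXi1 m c) ψ ψ' q Q
        hxid hxid2 hψd hψd2 hqQ hxia hxib hxpos hψposI

end
end

section
/- Suppose n ∈ C([0,1]) and σ ∈ C²([0,1]) satisfy Assumption A with constants n₁, n₂, M₁, M₂, let m ≥ 1 be an integer and let k > 0. Let ψ : (0,1] → ℝ be twice differentiable, not identically zero, and satisfy ψ''(r) + [k²n(r)²/σ(r) + σ'(r)²/(4σ(r)²) − σ''(r)/(2σ(r)) − σ'(r)/(σ(r)r) − m(m+1)/r²]·ψ(r) = 0 for all r ∈ (0,1]. Suppose 0 < a < b ≤ 1 are such that J_{m+1/2}(k√M₁·a) = J_{m+1/2}(k√M₁·b) = 0 and J_{m+1/2}(k√M₁·r) ≠ 0 for all r ∈ (a,b). Then ψ has at least one zero in the interval [a,b]. -/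
open Set Filter Topology

noncomputable section

def Acoef (m : ℕ) (c : ℝ) : ℕ → ℝ := fun s =>
  (-1 : ℝ) ^ s / ((s.factorial : ℝ) * Real.Gamma ((m : ℝ) + 1/2 + s + 1)) * (c/2) ^ (2*s+m)

lemma Gamma_pos (m : ℕ) (s : ℕ) : 0 < Real.Gamma ((m : ℝ) + 1/2 + s + 1) :=
  Real.Gamma_pos_of_pos (by positivity)

lemma Acoef_rec (m : ℕ) (c : ℝ) (s : ℕ) :
    Acoef m c (s+1) * (4 * ((s:ℝ)+1) * ((s:ℝ) + m + 3/2)) = -(Acoef m c s) * c^2 := by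
  have hΓ : Real.Gamma ((m : ℝ) + 1/2 + (s+1:ℕ) + 1)
      = ((m : ℝ) + 1/2 + s + 1) * Real.Gamma ((m : ℝ) + 1/2 + s + 1) := by
    have h := Real.Gamma_add_one (s := (m : ℝ) + 1/2 + s + 1) (by positivity)
    rw [show ((m : ℝ) + 1/2 + (s+1:ℕ) + 1) = ((m : ℝ) + 1/2 + s + 1) + 1 by push_cast; ring]
    exact h
  have hfac : (((s+1).factorial : ℝ)) = ((s:ℝ)+1) * (s.factorial : ℝ) := by
    rw [Nat.factorial_succ]; push_cast; ring
  have hpow : (c/2 : ℝ) ^ (2*(s+1)+m) = (c/2)^(2*s+m) * (c/2)^2 := by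
    rw [← pow_add]; congr 1; omega
  have hΓpos := Gamma_pos m s
  have hfacpos : (0:ℝ) < (s.factorial : ℝ) := by positivity
  unfold Acoef
  rw [hΓ, hfac, hpow, pow_succ]
  field_simp
  ring

lemma Acoef_abs (m : ℕ) (c : ℝ) (s : ℕ) :
    |Acoef m c (s+1)| * (4 * ((s:ℝ)+1) * ((s:ℝ) + m + 3/2)) = |Acoef m c s| * c^2 := by
  have h := congrArg abs (Acoef_rec m c s)
  rwa [abs_mul, abs_of_pos (show (0:ℝ) < 4 * ((s:ℝ)+1) * ((s:ℝ) + m + 3/2) by positivity),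
    abs_mul, abs_neg, abs_of_nonneg (sq_nonneg c)] at h

lemma Asummable (m : ℕ) (c : ℝ) {R : ℝ} (hR : 1 ≤ R) :
    Summable (fun s : ℕ => |Acoef m c s| * (2*(s:ℝ)+2*m+4)^3 * R^(2*s)) := by
  have hR0 : (0:ℝ) < R := lt_of_lt_of_le one_pos hR
  apply summable_of_ratio_norm_eventually_le (r := 1/2) (by norm_num)
  filter_upwards [Filter.eventually_ge_atTop (⌈4*c^2*R^2⌉₊)] with s hs
  have hsge : (4*c^2*R^2 : ℝ) ≤ (s:ℝ) := le_trans (Nat.le_ceil _) (by exact_mod_cast hs)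
  have hD₁pos : (0:ℝ) < 4 * ((s:ℝ)+1) * ((s:ℝ) + m + 3/2) := by positivity
  have hA1 : |Acoef m c (s+1)| = |Acoef m c s| * c^2 / (4 * ((s:ℝ)+1) * ((s:ℝ) + m + 3/2)) := by
    rw [eq_div_iff hD₁pos.ne']; exact Acoef_abs m c s
  have hnn : ∀ t : ℕ, (0:ℝ) ≤ |Acoef m c t| * (2*(t:ℝ)+2*m+4)^3 * R^(2*t) := fun t =>
    mul_nonneg (mul_nonneg (abs_nonneg _) (by positivity)) (pow_nonneg hR0.le _)
  rw [Real.norm_eq_abs, Real.norm_eq_abs, abs_of_nonneg (hnn (s+1)), abs_of_nonneg (hnn s)]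
  set X : ℝ := 2*(s:ℝ)+2*m+4 with hXdef
  have hX4 : (4:ℝ) ≤ X := by
    have h0s : (0:ℝ) ≤ (s:ℝ) := Nat.cast_nonneg s
    have h0m : (0:ℝ) ≤ (m:ℝ) := Nat.cast_nonneg m
    simp only [hXdef]; linarith
  have hX6 : (2*((s+1:ℕ):ℝ)+2*m+4) = X + 2 := by rw [hXdef]; push_cast; ring
  have hXD : X = 2*(s:ℝ)+2*m+4 := hXdef
  clear_value X
  have hXpos : (0:ℝ) < X := by linarith
  have h1 : (X+2)^3 ≤ 8 * X^3 := by nlinarith [sq_nonneg X, sq_nonneg (X+2)]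
  have h2 : 16*c^2*R^2 ≤ 4 * ((s:ℝ)+1) * ((s:ℝ) + m + 3/2) := by
    nlinarith [mul_nonneg (show (0:ℝ) ≤ (s:ℝ)+1 by positivity)
      (show (0:ℝ) ≤ (s:ℝ)+(m:ℝ)+1/2 by positivity)]
  have hAs : (0:ℝ) ≤ |Acoef m c s| := abs_nonneg _
  have hRpow : (0:ℝ) ≤ R^(2*s) := pow_nonneg hR0.le _
  have hpow2 : R^(2*(s+1)) = R^(2*s) * R^2 := by rw [show 2*(s+1) = 2*s+2 from by ring, pow_add]
  rw [hA1, hX6, hpow2]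
  have step : c^2 * R^2 * (X+2)^3 * 2 ≤ X^3 * (4 * ((s:ℝ)+1) * ((s:ℝ) + m + 3/2)) := by
    have s1 : c^2*R^2*2*(X+2)^3 ≤ c^2*R^2*2*(8*X^3) :=
      mul_le_mul_of_nonneg_left h1 (by positivity)
    have s2 : (16*c^2*R^2) * X^3 ≤ (4 * ((s:ℝ)+1) * ((s:ℝ) + m + 3/2)) * X^3 :=
      mul_le_mul_of_nonneg_right h2 (by positivity)
    nlinarith [s1, s2]
  have final := mul_le_mul_of_nonneg_left step (mul_nonneg hAs hRpow)
  rw [div_mul_eq_mul_div, div_mul_eq_mul_div, div_le_iff₀ hD₁pos]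
  linarith [final]

lemma exists_v (m : ℕ) (hm : 1 ≤ m) (c : ℝ) (hc : 0 < c) :
    ∃ v v₁ v₂ : ℝ → ℝ,
      (∀ r, HasDerivAt v (v₁ r) r) ∧ (∀ r, HasDerivAt v₁ (v₂ r) r) ∧
      (∀ r, 0 < r → r^2 * v₂ r + (c^2 * r^2 - (m:ℝ)*((m:ℝ)+1)) * v r = 0) ∧
      (∀ r, 0 < r → (besselJ ((m:ℝ) + 1/2) (c * r) = 0 ↔ v r = 0)) := by
  set A := Acoef m c with hA
  set f₀ : ℕ → ℝ → ℝ := fun s x => A s * x ^ (2*s+m+1) with hf₀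
  set f₁ : ℕ → ℝ → ℝ := fun s x => A s * ((2*s+m+1 : ℕ) : ℝ) * x ^ (2*s+m) with hf₁
  set f₂ : ℕ → ℝ → ℝ :=
    fun s x => A s * ((2*s+m+1 : ℕ) : ℝ) * ((2*s+m : ℕ) : ℝ) * x ^ (2*s+m-1) with hf₂
  set T : ℝ → ℕ → ℝ := fun R s => |A s| * (2*(s:ℝ)+2*m+4)^3 * R^(2*s) with hT
  -- basic facts about the cube factor
  have hD1 : ∀ s : ℕ, (1:ℝ) ≤ (2*(s:ℝ)+2*m+4)^3 := by
    intro s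
    have h0s : (0:ℝ) ≤ (s:ℝ) := Nat.cast_nonneg s
    have h0m : (0:ℝ) ≤ (m:ℝ) := Nat.cast_nonneg m
    exact one_le_pow₀ (by linarith)
  have hDfac : ∀ s : ℕ, ((2*s+m+1 : ℕ) : ℝ) * ((2*s+m : ℕ) : ℝ) ≤ (2*(s:ℝ)+2*m+4)^3 := by
    intro s
    have h0s : (0:ℝ) ≤ (s:ℝ) := Nat.cast_nonneg s
    have h0m : (0:ℝ) ≤ (m:ℝ) := Nat.cast_nonneg m
    push_cast
    set X : ℝ := 2*(s:ℝ)+2*m+4 with hX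
    have hX1 : (1:ℝ) ≤ X := by simp only [hX]; linarith
    have hf1 : 2*(s:ℝ)+m+1 ≤ X := by simp only [hX]; linarith
    have hf2 : 2*(s:ℝ)+m ≤ X := by simp only [hX]; linarith
    calc (2*(s:ℝ)+m+1) * (2*(s:ℝ)+m) ≤ X * X :=
          mul_le_mul hf1 hf2 (by linarith) (by linarith)
      _ ≤ X^3 := by nlinarith [sq_nonneg X]
  have hDfac1 : ∀ s : ℕ, ((2*s+m+1 : ℕ) : ℝ) ≤ (2*(s:ℝ)+2*m+4)^3 := by
    intro s
    have h0s : (0:ℝ) ≤ (s:ℝ) := Nat.cast_nonneg s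
    have h0m : (0:ℝ) ≤ (m:ℝ) := Nat.cast_nonneg m
    push_cast
    set X : ℝ := 2*(s:ℝ)+2*m+4 with hX
    have hX1 : (1:ℝ) ≤ X := by simp only [hX]; linarith
    have hf1 : 2*(s:ℝ)+m+1 ≤ X := by simp only [hX]; linarith
    calc 2*(s:ℝ)+m+1 ≤ X := hf1
      _ ≤ X^3 := by nlinarith [sq_nonneg X, sq_nonneg (X-1)]
  -- norm bounds
  have hb₀ : ∀ (R z : ℝ), 1 ≤ R → |z| ≤ R → ∀ s, ‖f₀ s z‖ ≤ T R s * R^(m+1) := by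
    intro R z hR hz s
    have hR0 : (0:ℝ) < R := lt_of_lt_of_le one_pos hR
    simp only [hf₀, hT, Real.norm_eq_abs, abs_mul]
    rw [abs_pow]
    have hzp : |z| ^ (2*s+m+1) ≤ R ^ (2*s+m+1) := pow_le_pow_left₀ (abs_nonneg z) hz _
    have hRe : R ^ (2*s+m+1) = R^(2*s) * R^(m+1) := by rw [← pow_add]; ring_nf
    have h1 : (0:ℝ) ≤ |A s| := abs_nonneg _
    have h2 : (0:ℝ) ≤ R^(2*s) := by positivity
    have h3 : (0:ℝ) ≤ R^(m+1) := by positivity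
    have key0 : |A s| * R^(2*s) ≤ (2*(s:ℝ)+2*m+4)^3 * (|A s| * R^(2*s)) :=
      le_mul_of_one_le_left (mul_nonneg h1 h2) (hD1 s)
    have key := mul_le_mul_of_nonneg_right key0 h3
    have step1 : |A s| * |z| ^ (2*s+m+1) ≤ |A s| * (R^(2*s) * R^(m+1)) := by
      rw [← hRe]; exact mul_le_mul_of_nonneg_left hzp (abs_nonneg _)
    nlinarith [key, step1]
  have hb₁ : ∀ (R z : ℝ), 1 ≤ R → |z| ≤ R → ∀ s, ‖f₁ s z‖ ≤ T R s * R^(m+1) := by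
    intro R z hR hz s
    have hR0 : (0:ℝ) < R := lt_of_lt_of_le one_pos hR
    simp only [hf₁, hT, Real.norm_eq_abs, abs_mul]
    rw [abs_pow]
    have hN : |((2*s+m+1 : ℕ) : ℝ)| = ((2*s+m+1 : ℕ) : ℝ) := abs_of_nonneg (Nat.cast_nonneg _)
    rw [hN]
    have hzp : |z| ^ (2*s+m) ≤ R ^ (2*s+m) := pow_le_pow_left₀ (abs_nonneg z) hz _
    have hRe : R ^ (2*s+m) ≤ R^(2*s) * R^(m+1) := by
      rw [← pow_add]
      exact pow_le_pow_right₀ hR (by omega)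
    have h1 : (0:ℝ) ≤ |A s| := abs_nonneg _
    have h6 : (0:ℝ) ≤ |z| ^ (2*s+m) := by positivity
    have hmul : ((2*s+m+1 : ℕ) : ℝ) * |z|^(2*s+m)
        ≤ (2*(s:ℝ)+2*m+4)^3 * (R^(2*s) * R^(m+1)) :=
      mul_le_mul (hDfac1 s) (le_trans hzp hRe) h6 (by positivity)
    have key := mul_le_mul_of_nonneg_left hmul h1
    nlinarith [key]
  have hb₂ : ∀ (R z : ℝ), 1 ≤ R → |z| ≤ R → ∀ s, ‖f₂ s z‖ ≤ T R s * R^(m+1) := by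
    intro R z hR hz s
    have hR0 : (0:ℝ) < R := lt_of_lt_of_le one_pos hR
    simp only [hf₂, hT, Real.norm_eq_abs, abs_mul]
    rw [abs_pow]
    have hN : |((2*s+m+1 : ℕ) : ℝ)| = ((2*s+m+1 : ℕ) : ℝ) := abs_of_nonneg (Nat.cast_nonneg _)
    have hN2 : |((2*s+m : ℕ) : ℝ)| = ((2*s+m : ℕ) : ℝ) := abs_of_nonneg (Nat.cast_nonneg _)
    rw [hN, hN2]
    have hzp : |z| ^ (2*s+m-1) ≤ R ^ (2*s+m-1) := pow_le_pow_left₀ (abs_nonneg z) hz _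
    have hRe : R ^ (2*s+m-1) ≤ R^(2*s) * R^(m+1) := by
      rw [← pow_add]
      exact pow_le_pow_right₀ hR (by omega)
    have h1 : (0:ℝ) ≤ |A s| := abs_nonneg _
    have h6 : (0:ℝ) ≤ |z| ^ (2*s+m-1) := by positivity
    have hmul : ((2*s+m+1 : ℕ) : ℝ) * ((2*s+m : ℕ) : ℝ) * |z|^(2*s+m-1)
        ≤ (2*(s:ℝ)+2*m+4)^3 * (R^(2*s) * R^(m+1)) :=
      mul_le_mul (hDfac s) (le_trans hzp hRe) h6 (by positivity)
    have key := mul_le_mul_of_nonneg_left hmul h1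
    nlinarith [key]
  -- termwise derivatives
  have hd₀ : ∀ s (z : ℝ), HasDerivAt (fun x => f₀ s x) (f₁ s z) z := by
    intro s z
    have h := (hasDerivAt_pow (2*s+m+1) z).const_mul (A s)
    have he : 2*s+m+1-1 = 2*s+m := by omega
    rw [he] at h
    refine h.congr_deriv ?_
    simp only [hf₁]
    ring
  have hd₁ : ∀ s (z : ℝ), HasDerivAt (fun x => f₁ s x) (f₂ s z) z := by
    intro s z
    have h := (hasDerivAt_pow (2*s+m) z).const_mul (A s * ((2*s+m+1 : ℕ) : ℝ))
    refine h.congr_deriv ?_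
    simp only [hf₂]
    ring
  -- summability at a point
  have hsum₀ : ∀ r : ℝ, Summable (fun s => f₀ s r) := by
    intro r
    have hR : (1:ℝ) ≤ |r| + 1 := le_add_of_nonneg_left (abs_nonneg r)
    exact Summable.of_norm_bounded ((Asummable m c hR).mul_right _)
      (hb₀ (|r|+1) r hR (by linarith))
  have hsum₂ : ∀ r : ℝ, Summable (fun s => f₂ s r) := by
    intro r
    have hR : (1:ℝ) ≤ |r| + 1 := le_add_of_nonneg_left (abs_nonneg r)
    exact Summable.of_norm_bounded ((Asummable m c hR).mul_right _)
      (hb₂ (|r|+1) r hR (by linarith))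
  refine ⟨fun x => ∑' s, f₀ s x, fun x => ∑' s, f₁ s x, fun x => ∑' s, f₂ s x, ?_, ?_, ?_, ?_⟩
  · -- first derivative
    intro y
    set R := |y| + 1 with hRdef
    have hR : (1:ℝ) ≤ R := le_add_of_nonneg_left (abs_nonneg y)
    have hR0 : (0:ℝ) < R := lt_of_lt_of_le one_pos hR
    apply hasDerivAt_tsum_of_isPreconnected
      (u := fun s => T R s * R^(m+1)) ((Asummable m c hR).mul_right _)
      (Metric.isOpen_ball (x := (0:ℝ)) (ε := R))
      ((convex_ball (0:ℝ) R).isPreconnected) (y₀ := 0)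
    · intro s z hz
      exact hd₀ s z
    · intro s z hz
      rw [Metric.mem_ball, Real.dist_eq, sub_zero] at hz
      exact hb₁ R z hR hz.le s
    · rw [Metric.mem_ball, dist_self]; exact hR0
    · have : (fun s => f₀ s 0) = fun s => (0:ℝ) := by
        funext s
        simp only [hf₀]
        rw [zero_pow (by omega : 2*s+m+1 ≠ 0), mul_zero]
      rw [this]; exact summable_zero
    · rw [Metric.mem_ball, Real.dist_eq, sub_zero]; linarith [abs_nonneg y]
  · -- second derivative
    intro y
    set R := |y| + 1 with hRdef
    have hR : (1:ℝ) ≤ R := le_add_of_nonneg_left (abs_nonneg y)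
    have hR0 : (0:ℝ) < R := lt_of_lt_of_le one_pos hR
    apply hasDerivAt_tsum_of_isPreconnected
      (u := fun s => T R s * R^(m+1)) ((Asummable m c hR).mul_right _)
      (Metric.isOpen_ball (x := (0:ℝ)) (ε := R))
      ((convex_ball (0:ℝ) R).isPreconnected) (y₀ := 0)
    · intro s z hz
      exact hd₁ s z
    · intro s z hz
      rw [Metric.mem_ball, Real.dist_eq, sub_zero] at hz
      exact hb₂ R z hR hz.le s
    · rw [Metric.mem_ball, dist_self]; exact hR0
    · have : (fun s => f₁ s 0) = fun s => (0:ℝ) := by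
        funext s
        simp only [hf₁]
        rw [zero_pow (by omega : 2*s+m ≠ 0), mul_zero]
      rw [this]; exact summable_zero
    · rw [Metric.mem_ball, Real.dist_eq, sub_zero]; linarith [abs_nonneg y]
  · -- the ODE
    intro r hr
    set M : ℝ := (m:ℝ)*((m:ℝ)+1) with hM
    set av : ℕ → ℝ := fun s =>
      A s * (((2*s+m+1 : ℕ) : ℝ) * ((2*s+m : ℕ) : ℝ) - M) * r^(2*s+m+1) with hav
    set bv : ℕ → ℝ := fun s => A s * c^2 * r^(2*s+m+3) with hbv
    have hav_eq : av = fun s => r^2 * f₂ s r - M * f₀ s r := by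
      funext s
      simp only [hav, hf₀, hf₂]
      rw [show 2*s+m+1 = 2*s+m-1+2 from by omega, pow_add]
      ring
    have hbv_eq : bv = fun s => (c^2*r^2) * f₀ s r := by
      funext s
      simp only [hbv, hf₀]
      rw [show 2*s+m+3 = 2*s+m+1+2 from by omega, pow_add]
      ring
    have hsav : Summable av := by
      rw [hav_eq]; exact ((hsum₂ r).mul_left _).sub ((hsum₀ r).mul_left _)
    have hsbv : Summable bv := by
      rw [hbv_eq]; exact (hsum₀ r).mul_left _
    have hshift : ∀ s : ℕ, av (s+1) = -(bv s) := by
      intro s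
      have hrec := Acoef_rec m c s
      simp only [hav, hbv]
      rw [show 2*(s+1)+m+1 = 2*s+m+3 from by omega,
        show 2*(s+1)+m = 2*s+m+2 from by omega]
      push_cast
      rw [hM]
      push_cast
      linear_combination (r^(2*s+m+3)) * hrec
    have hav0 : av 0 = 0 := by
      simp only [hav, hM]
      have : (((2*0+m+1 : ℕ) : ℝ) * ((2*0+m : ℕ) : ℝ) - (m:ℝ)*((m:ℝ)+1)) = 0 := by
        push_cast; ring
      rw [this]
      ring
    have e1 : r^2 * (∑' s, f₂ s r) = ∑' s, r^2 * f₂ s r := (tsum_mul_left).symm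
    have e2 : (c^2*r^2 - M) * (∑' s, f₀ s r) = ∑' s, (c^2*r^2 - M) * f₀ s r :=
      (tsum_mul_left).symm
    have e3 : (fun s => r^2 * f₂ s r) = fun s => av s + (M * f₀ s r) := by
      rw [hav_eq]; funext s; ring
    have hsum₀' : Summable (fun s => M * f₀ s r) := (hsum₀ r).mul_left _
    have hsum₀'' : Summable (fun s => (c^2*r^2 - M) * f₀ s r) := (hsum₀ r).mul_left _
    have e4 : ∑' s, r^2 * f₂ s r = (∑' s, av s) + ∑' s, M * f₀ s r := by
      rw [e3]; exact hsav.tsum_add hsum₀'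
    have e5 : ∑' s, (c^2*r^2 - M) * f₀ s r = (∑' s, bv s) - ∑' s, M * f₀ s r := by
      have : (fun s => (c^2*r^2 - M) * f₀ s r) = fun s => bv s - (M * f₀ s r) := by
        rw [hbv_eq]; funext s; ring
      rw [this]; exact hsbv.tsum_sub hsum₀'
    have hava : ∑' s, av s = -∑' s, bv s := by
      rw [hsav.tsum_eq_zero_add, hav0, zero_add]
      rw [show (fun s => av (s+1)) = fun s => -(bv s) from funext hshift]
      rw [tsum_neg]
    rw [e1, e2, e4, e5, hava]
    ring
  · -- the bridge to besselJ
    intro r hr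
    have hcr : (0:ℝ) < c * r := mul_pos hc hr
    have hcr2 : (0:ℝ) < c * r / 2 := by linarith
    have hsq : (0:ℝ) < Real.sqrt (c * r / 2) := Real.sqrt_pos.2 hcr2
    have hterm : ∀ s : ℕ,
        ((-1 : ℝ) ^ s / ((s.factorial : ℝ) * Real.Gamma ((m:ℝ) + 1/2 + (s : ℝ) + 1)))
          * (c * r / 2) ^ (2 * (s : ℝ) + ((m:ℝ) + 1/2))
        = ((-1 : ℝ) ^ s / ((s.factorial : ℝ) * Real.Gamma ((m:ℝ) + 1/2 + (s : ℝ) + 1))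
            * (c * r / 2) ^ (2*s+m)) * Real.sqrt (c * r / 2) := by
      intro s
      have hexp : (2 * (s : ℝ) + ((m:ℝ) + 1/2)) = ((2*s+m : ℕ) : ℝ) + (1/2 : ℝ) := by
        push_cast; ring
      rw [hexp, Real.rpow_add hcr2, Real.rpow_natCast, Real.sqrt_eq_rpow]
      ring
    have hJ : besselJ ((m:ℝ) + 1/2) (c * r)
        = (∑' s : ℕ, (-1 : ℝ) ^ s / ((s.factorial : ℝ) * Real.Gamma ((m:ℝ) + 1/2 + (s : ℝ) + 1))
            * (c * r / 2) ^ (2*s+m)) * Real.sqrt (c * r / 2) := by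
      rw [besselJ]
      rw [show (fun s : ℕ => ((-1 : ℝ) ^ s / ((s.factorial : ℝ)
            * Real.Gamma ((m:ℝ) + 1/2 + (s : ℝ) + 1)))
          * (c * r / 2) ^ (2 * (s : ℝ) + ((m:ℝ) + 1/2)))
        = fun s : ℕ => ((-1 : ℝ) ^ s / ((s.factorial : ℝ)
            * Real.Gamma ((m:ℝ) + 1/2 + (s : ℝ) + 1))
            * (c * r / 2) ^ (2*s+m)) * Real.sqrt (c * r / 2) from funext hterm]
      exact tsum_mul_right
    have hv : (∑' s, f₀ s r)
        = (∑' s : ℕ, (-1 : ℝ) ^ s / ((s.factorial : ℝ) * Real.Gamma ((m:ℝ) + 1/2 + (s : ℝ) + 1))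
            * (c * r / 2) ^ (2*s+m)) * r := by
      rw [show (fun s : ℕ => f₀ s r)
          = fun s : ℕ => ((-1 : ℝ) ^ s / ((s.factorial : ℝ)
              * Real.Gamma ((m:ℝ) + 1/2 + (s : ℝ) + 1))
              * (c * r / 2) ^ (2*s+m)) * r from ?_]
      · exact tsum_mul_right
      funext s
      simp only [hf₀, hA, Acoef]
      rw [show (c * r / 2) = (c/2) * r from by ring, mul_pow, pow_succ]
      ring
    show besselJ ((m:ℝ) + 1/2) (c * r) = 0 ↔ (∑' s : ℕ, f₀ s r) = 0
    rw [hJ, hv]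
    constructor
    · intro h
      rcases mul_eq_zero.1 h with h | h
      · rw [h]; ring
      · exact absurd h hsq.ne'
    · intro h
      rcases mul_eq_zero.1 h with h | h
      · rw [h]; ring
      · exact absurd h hr.ne'

lemma sturm_core_pos (a b : ℝ) (hab : a < b) (u u' p p' : ℝ → ℝ)
    (hu : ∀ x, HasDerivAt u (u' x) x) (hu'c : Continuous u')
    (hpc : ContinuousOn p (Icc a b)) (hp'c : ContinuousOn p' (Icc a b))
    (hp : ∀ x ∈ Ico a b, HasDerivAt p (p' x) x)
    (hW : ∀ x ∈ Ioo a b, ∃ q, 0 ≤ q ∧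
      HasDerivAt (fun y => u' y * p y - u y * p' y) (q * (u x * p x)) x)
    (hua : u a = 0) (hub : u b = 0)
    (hupos : ∀ x ∈ Ioo a b, 0 < u x) (hppos : ∀ x ∈ Icc a b, 0 < p x) : False := by
  have huc : Continuous u := by
    have : Differentiable ℝ u := fun x => (hu x).differentiableAt
    exact this.continuous
  have hWc : ContinuousOn (fun y => u' y * p y - u y * p' y) (Icc a b) :=
    (hu'c.continuousOn.mul hpc).sub (huc.continuousOn.mul hp'c)
  -- u' a ≥ 0
  have hu'a : 0 ≤ u' a := by
    have h1 : HasDerivWithinAt u (u' a) (Ioi a) a := (hu a).hasDerivWithinAt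
    rw [hasDerivWithinAt_iff_tendsto_slope] at h1
    have hs : Ioi a \ {a} = Ioi a := diff_singleton_eq_self (by simp)
    rw [hs] at h1
    refine ge_of_tendsto h1 ?_
    filter_upwards [Ioo_mem_nhdsGT hab] with y hy
    rw [slope_def_field]
    have := hupos y hy
    apply div_nonneg (by rw [hua]; linarith) (by linarith [hy.1])
  have hu'b : u' b ≤ 0 := by
    have h1 : HasDerivWithinAt u (u' b) (Iio b) b := (hu b).hasDerivWithinAt
    rw [hasDerivWithinAt_iff_tendsto_slope] at h1
    have hs : Iio b \ {b} = Iio b := diff_singleton_eq_self (by simp)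
    rw [hs] at h1
    refine le_of_tendsto h1 ?_
    filter_upwards [Ioo_mem_nhdsLT hab] with y hy
    rw [slope_def_field]
    have := hupos y hy
    apply div_nonpos_of_nonneg_of_nonpos (by rw [hub]; linarith) (by linarith [hy.2])
  -- monotone
  have hmono : MonotoneOn (fun y => u' y * p y - u y * p' y) (Icc a b) := by
    apply monotoneOn_of_deriv_nonneg (convex_Icc a b) hWc
    · intro x hx
      rw [interior_Icc] at hx
      obtain ⟨q, hq, hd⟩ := hW x hx
      exact hd.differentiableAt.differentiableWithinAt
    · intro x hx
      rw [interior_Icc] at hx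
      obtain ⟨q, hq, hd⟩ := hW x hx
      rw [hd.deriv]
      exact mul_nonneg hq (mul_nonneg (hupos x hx).le
        (hppos x (Ioo_subset_Icc_self hx)).le)
  have hmemA : a ∈ Icc a b := ⟨le_refl a, hab.le⟩
  have hmemB : b ∈ Icc a b := ⟨hab.le, le_refl b⟩
  have hWa : 0 ≤ u' a * p a - u a * p' a := by
    rw [hua]
    have := hppos a hmemA
    nlinarith
  have hWb : u' b * p b - u b * p' b ≤ 0 := by
    rw [hub]
    have := hppos b hmemB
    nlinarith
  have hWab := hmono hmemA hmemB hab.le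
  simp only at hWab
  have hW0 : ∀ x ∈ Icc a b, u' x * p x - u x * p' x = 0 := by
    intro x hx
    have h1 := hmono hmemA hx hx.1
    have h2 := hmono hx hmemB hx.2
    simp only at h1 h2
    linarith
  -- u / p constant
  have hcont : ContinuousOn (fun y => u y / p y) (Icc a b) :=
    huc.continuousOn.div hpc (fun x hx => (hppos x hx).ne')
  have hder : ∀ x ∈ Ico a b, HasDerivWithinAt (fun y => u y / p y) 0 (Ici x) x := by
    intro x hx
    have hx' : x ∈ Icc a b := mem_Icc_of_Ico hx
    have hd : HasDerivAt (fun y => u y / p y)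
        ((u' x * p x - u x * p' x) / p x ^ 2) x :=
      (hu x).div (hp x hx) (hppos x hx').ne'
    rw [hW0 x hx', zero_div] at hd
    exact hd.hasDerivWithinAt
  have hconst := constant_of_has_deriv_right_zero hcont hder
  set c := (a + b) / 2 with hc
  have hcmem : c ∈ Ioo a b := ⟨by linarith, by linarith⟩
  have h1 := hconst c (Ioo_subset_Icc_self hcmem)
  simp only [hua, zero_div] at h1
  have h2 := hupos c hcmem
  have h3 := hppos c (Ioo_subset_Icc_self hcmem)
  rw [div_eq_zero_iff] at h1
  rcases h1 with h1 | h1 <;> linarith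

/-- Sign constancy of a nonvanishing continuous function on an interval. -/
lemma sign_const {a b : ℝ} {f : ℝ → ℝ} {s : Set ℝ} (hsub : s ⊆ Icc a b)
    (hconn : OrdConnected s)
    (hc : ContinuousOn f (Icc a b)) (hne : ∀ x ∈ s, f x ≠ 0) :
    (∀ x ∈ s, 0 < f x) ∨ (∀ x ∈ s, f x < 0) := by
  by_contra h
  push_neg at h
  obtain ⟨⟨x, hx, hfx⟩, ⟨y, hy, hfy⟩⟩ := h
  have hfx' : f x < 0 := lt_of_le_of_ne hfx (hne x hx)
  have hfy' : 0 < f y := lt_of_le_of_ne hfy (Ne.symm (hne y hy))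
  rcases le_total x y with hxy | hxy
  · have : (0:ℝ) ∈ Icc (f x) (f y) := ⟨hfx'.le, hfy'.le⟩
    obtain ⟨z, hz, hz0⟩ := intermediate_value_Icc hxy (hc.mono (fun t ht => hsub (hconn.out hx hy ht))) this
    exact hne z (hconn.out hx hy hz) hz0
  · have : (0:ℝ) ∈ Icc (f x) (f y) := ⟨hfx'.le, hfy'.le⟩
    obtain ⟨z, hz, hz0⟩ := intermediate_value_Icc' hxy (hc.mono (fun t ht => hsub (hconn.out hy hx ht))) this
    exact hne z (hconn.out hy hx hz) hz0

lemma sturm_core_s8 (a b : ℝ) (hab : a < b) (u u' p p' : ℝ → ℝ)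
    (hu : ∀ x, HasDerivAt u (u' x) x) (hu'c : Continuous u')
    (hpc : ContinuousOn p (Icc a b)) (hp'c : ContinuousOn p' (Icc a b))
    (hp : ∀ x ∈ Ico a b, HasDerivAt p (p' x) x)
    (hW : ∀ x ∈ Ioo a b, ∃ q, 0 ≤ q ∧
      HasDerivAt (fun y => u' y * p y - u y * p' y) (q * (u x * p x)) x)
    (hua : u a = 0) (hub : u b = 0)
    (hune : ∀ x ∈ Ioo a b, u x ≠ 0) (hpne : ∀ x ∈ Icc a b, p x ≠ 0) : False := by
  have huc : Continuous u := by
    have : Differentiable ℝ u := fun x => (hu x).differentiableAt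
    exact this.continuous
  have husign := sign_const (Ioo_subset_Icc_self (a := a) (b := b)) ordConnected_Ioo
    huc.continuousOn hune
  have hpsign := sign_const (le_refl (Icc a b)) ordConnected_Icc hpc hpne
  -- helper equalities for negation
  have e1 : ∀ (f g f' g' : ℝ → ℝ),
      (fun y => (-f y) * g y - (-f' y) * g' y) = (fun y => -(f y * g y - f' y * g' y)) :=
    fun f g f' g' => funext fun y => by ring
  rcases husign with hup | hun <;> rcases hpsign with hpp | hpn
  · exact sturm_core_pos a b hab u u' p p' hu hu'c hpc hp'c hp hW hua hub hup hpp
  · -- u > 0, p < 0 : use (u, -p)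
    refine sturm_core_pos a b hab u u' (fun y => -p y) (fun y => -p' y) hu hu'c
      hpc.neg hp'c.neg (fun x hx => (hp x hx).neg) ?_ hua hub hup
      (fun x hx => by simpa using hpn x hx)
    intro x hx
    obtain ⟨q, hq, hd⟩ := hW x hx
    refine ⟨q, hq, ?_⟩
    have h2 := hd.neg
    have e2 : (fun y => u' y * -p y - u y * -p' y) = (fun y => -(u' y * p y - u y * p' y)) :=
      funext fun y => by ring
    rw [e2, show q * (u x * -p x) = -(q * (u x * p x)) by ring]
    exact h2
  · -- u < 0, p > 0 : use (-u, p)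
    refine sturm_core_pos a b hab (fun y => -u y) (fun y => -u' y) p p'
      (fun x => (hu x).neg) hu'c.neg hpc hp'c hp ?_ (by simp [hua]) (by simp [hub])
      (fun x hx => by simpa using hun x hx) hpp
    intro x hx
    obtain ⟨q, hq, hd⟩ := hW x hx
    refine ⟨q, hq, ?_⟩
    rw [e1, show q * (-u x * p x) = -(q * (u x * p x)) by ring]
    exact hd.neg
  · -- u < 0, p < 0 : use (-u, -p)
    refine sturm_core_pos a b hab (fun y => -u y) (fun y => -u' y)
      (fun y => -p y) (fun y => -p' y)
      (fun x => (hu x).neg) hu'c.neg hpc.neg hp'c.neg (fun x hx => (hp x hx).neg)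
      ?_ (by simp [hua]) (by simp [hub])
      (fun x hx => by simpa using hun x hx) (fun x hx => by simpa using hpn x hx)
    intro x hx
    obtain ⟨q, hq, hd⟩ := hW x hx
    refine ⟨q, hq, ?_⟩
    have e2 : (fun y => -u' y * -p y - -u y * -p' y) = (fun y => u' y * p y - u y * p' y) :=
      funext fun y => by ring
    rw [e2, show q * (-u x * -p x) = q * (u x * p x) by ring]
    exact hd

/-- Sturm comparison in three dimensions: between two consecutive zeros of
`r ↦ J_{m+1/2}(k√M₁·r)` in `(0,1]`, a nontrivial solution `ψ` of
`ψ'' + [k²n²/σ + σ'²/(4σ²) − σ''/(2σ) − σ'/(σr) − m(m+1)/r²]ψ = 0`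
has at least one zero. -/
theorem sturm_comparison_3d
    (n σ : ℝ → ℝ) (n₁ n₂ M₁ M₂ : ℝ) (hA : AssumptionA n σ n₁ n₂ M₁ M₂)
    (m : ℕ) (hm : 1 ≤ m) (k : ℝ) (hk : 0 < k)
    (ψ : ℝ → ℝ)
    (hψ : ∀ r ∈ Ioc (0:ℝ) 1,
      DifferentiableWithinAt ℝ ψ (Ioc 0 1) r ∧
      DifferentiableWithinAt ℝ (derivWithin ψ (Ioc 0 1)) (Ioc 0 1) r)
    (hψne : ¬ ∀ r ∈ Ioc (0:ℝ) 1, ψ r = 0)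
    (hode : ∀ r ∈ Ioc (0:ℝ) 1,
      derivWithin (derivWithin ψ (Ioc 0 1)) (Ioc 0 1) r
        + (k ^ 2 * n r ^ 2 / σ r
            + (derivWithin σ (Icc 0 1) r) ^ 2 / (4 * σ r ^ 2)
            - derivWithin (derivWithin σ (Icc 0 1)) (Icc 0 1) r / (2 * σ r)
            - derivWithin σ (Icc 0 1) r / (σ r * r)
            - (m : ℝ) * ((m : ℝ) + 1) / r ^ 2) * ψ r = 0)
    (a b : ℝ) (ha : 0 < a) (hab : a < b) (hb : b ≤ 1)
    (hJa : besselJ ((m : ℝ) + 1 / 2) (k * Real.sqrt M₁ * a) = 0)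
    (hJb : besselJ ((m : ℝ) + 1 / 2) (k * Real.sqrt M₁ * b) = 0)
    (hJ : ∀ r ∈ Ioo a b, besselJ ((m : ℝ) + 1 / 2) (k * Real.sqrt M₁ * r) ≠ 0) :
    ∃ r ∈ Icc a b, ψ r = 0 := by
  obtain ⟨hn₁, hn₁₂, hM₁, hM₁₂, hncont, hσcont, hpt⟩ := hA
  -- σ is positive on [0,1]
  have hσpos : ∀ r ∈ Icc (0:ℝ) 1, 0 < σ r := by
    intro r hr
    obtain ⟨h1, h2, h3, h4, h5, h6⟩ := hpt r hr
    have hn0 : 0 < n r ^ 2 := by nlinarith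
    rcases lt_trichotomy (σ r) 0 with hσ | hσ | hσ
    · have : n r ^ 2 / σ r < 0 := div_neg_of_pos_of_neg hn0 hσ
      linarith
    · rw [hσ, div_zero] at h4; linarith
    · exact hσ
  set c := k * Real.sqrt M₁ with hcdef
  have hsqrtpos : 0 < Real.sqrt M₁ := Real.sqrt_pos.2 (by linarith)
  have hc : 0 < c := mul_pos hk hsqrtpos
  have hc2 : c ^ 2 = k ^ 2 * M₁ := by
    rw [hcdef, mul_pow, Real.sq_sqrt (by linarith : (0:ℝ) ≤ M₁)]
  obtain ⟨v, v₁, v₂, hv, hv₁, hODE, hbridge⟩ := exists_v m hm c hc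
  have hsubI : Icc a b ⊆ Ioc (0:ℝ) 1 := fun x hx =>
    ⟨lt_of_lt_of_le ha hx.1, le_trans hx.2 hb⟩
  have hva : v a = 0 := (hbridge a ha).1 hJa
  have hvb : v b = 0 := (hbridge b (lt_trans ha hab)).1 hJb
  have hvne : ∀ x ∈ Ioo a b, v x ≠ 0 := by
    intro x hx hvx
    exact hJ x hx ((hbridge x (lt_trans ha hx.1)).2 hvx)
  by_contra hcon
  push_neg at hcon
  set p' := derivWithin ψ (Ioc 0 1) with hp'def
  set p'' := derivWithin (derivWithin ψ (Ioc 0 1)) (Ioc 0 1) with hp''def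
  have hmem : ∀ x ∈ Ico a b, Ioc (0:ℝ) 1 ∈ 𝓝 x := by
    intro x hx
    exact Ioc_mem_nhds (lt_of_lt_of_le ha hx.1) (lt_of_lt_of_le hx.2 hb)
  have hxmemI : ∀ x ∈ Ico a b, x ∈ Ioc (0:ℝ) 1 := fun x hx =>
    ⟨lt_of_lt_of_le ha hx.1, le_trans hx.2.le hb⟩
  have hψd1 : ∀ x ∈ Ico a b, HasDerivAt ψ (p' x) x := fun x hx =>
    ((hψ x (hxmemI x hx)).1.hasDerivWithinAt).hasDerivAt (hmem x hx)
  have hψd2 : ∀ x ∈ Ico a b, HasDerivAt p' (p'' x) x := fun x hx =>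
    ((hψ x (hxmemI x hx)).2.hasDerivWithinAt).hasDerivAt (hmem x hx)
  have hpc : ContinuousOn ψ (Icc a b) := fun x hx =>
    ((hψ x (hsubI hx)).1.continuousWithinAt).mono hsubI
  have hp'c : ContinuousOn p' (Icc a b) := fun x hx =>
    ((hψ x (hsubI hx)).2.continuousWithinAt).mono hsubI
  have hv₁c : Continuous v₁ :=
    continuous_iff_continuousAt.2 fun x => (hv₁ x).continuousAt
  refine sturm_core_s8 a b hab v v₁ ψ p' hv hv₁c hpc hp'c hψd1 ?_ hva hvb hvne hcon
  intro x hx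
  have hxico : x ∈ Ico a b := ⟨hx.1.le, hx.2⟩
  have hxI : x ∈ Ioc (0:ℝ) 1 := hxmemI x hxico
  have hx0 : (0:ℝ) < x := lt_trans ha hx.1
  have hxIcc : x ∈ Icc (0:ℝ) 1 := ⟨hx0.le, hxI.2⟩
  obtain ⟨h1, h2, h3, h4, h5, h6⟩ := hpt x hxIcc
  have hσx := hσpos x hxIcc
  set q : ℝ := k ^ 2 * n x ^ 2 / σ x
      + (derivWithin σ (Icc 0 1) x) ^ 2 / (4 * σ x ^ 2)
      - derivWithin (derivWithin σ (Icc 0 1)) (Icc 0 1) x / (2 * σ x)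
      - derivWithin σ (Icc 0 1) x / (σ x * x) - c ^ 2 with hqdef
  have hq : 0 ≤ q := by
    have t1 : k ^ 2 * M₁ ≤ k ^ 2 * (n x ^ 2 / σ x) :=
      mul_le_mul_of_nonneg_left h4 (sq_nonneg k)
    have t1' : k ^ 2 * n x ^ 2 / σ x = k ^ 2 * (n x ^ 2 / σ x) := mul_div_assoc _ _ _
    have t2 : derivWithin (derivWithin σ (Icc 0 1)) (Icc 0 1) x / (2 * σ x)
        ≤ (derivWithin σ (Icc 0 1) x) ^ 2 / (4 * σ x ^ 2) := by
      rw [div_le_div_iff₀ (by positivity) (by positivity)]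
      nlinarith [h6, hσx]
    have t3 : derivWithin σ (Icc 0 1) x / (σ x * x) ≤ 0 :=
      div_nonpos_of_nonpos_of_nonneg h3 (by positivity)
    rw [hqdef, hc2, t1']
    linarith
  refine ⟨q, hq, ?_⟩
  have hd := ((hv₁ x).mul (hψd1 x hxico)).sub ((hv x).mul (hψd2 x hxico))
  have hveq : x ^ 2 * v₂ x = ((m:ℝ)*((m:ℝ)+1) - c^2 * x^2) * v x := by
    have h := hODE x hx0
    linear_combination h
  have hv2 : v₂ x = ((m:ℝ)*((m:ℝ)+1)/x^2 - c^2) * v x := by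
    have h2 : x ^ 2 ≠ 0 := pow_ne_zero 2 hx0.ne'
    field_simp
    linear_combination hveq
  have hp2 : p'' x = -((k ^ 2 * n x ^ 2 / σ x
      + (derivWithin σ (Icc 0 1) x) ^ 2 / (4 * σ x ^ 2)
      - derivWithin (derivWithin σ (Icc 0 1)) (Icc 0 1) x / (2 * σ x)
      - derivWithin σ (Icc 0 1) x / (σ x * x)
      - (m : ℝ) * ((m : ℝ) + 1) / x ^ 2) * ψ x) := by
    have h := hode x hxI
    linarith
  have hgoal : v₂ x * ψ x + v₁ x * p' x - (v₁ x * p' x + v x * p'' x)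
      = q * (v x * ψ x) := by
    rw [hv2, hp2, hqdef]
    ring
  rw [← hgoal]
  exact hd

end
end

section
/- Let σ, n > 0 be constants with n > √σ, and let m ≥ 1 be an integer. Define the spherical Bessel function j_m(x) = √(π/(2x))·J_{m+1/2}(x) for x > 0, and define f : (0,∞) → ℝ by f(k) = J_{m+1/2}(k·n/√σ)·j_m'(k) − √σ·n·j_m'(k·n/√σ)·J_{m+1/2}(k), where primes denote derivatives. Suppose 0 < a < b satisfy J_{m+1/2}(a) = J_{m+1/2}(b) = 0, J_{m+1/2}(r) ≠ 0 for all r ∈ (a,b), and J_{m+1/2}(r) > 0 for all r ∈ (0, √σ·b/n]. Then f has at least one root in the open interval (√σ·a/n, √σ·b/n). -/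
set_option maxHeartbeats 1000000


open Set

noncomputable section

/-- The spherical Bessel function `j_m(x) = √(π/(2x))·J_{m+1/2}(x)`. -/
def sphBesselJ (m : ℕ) (x : ℝ) : ℝ :=
  Real.sqrt (Real.pi / (2 * x)) * besselJ ((m : ℝ) + 1 / 2) x

namespace BesselProofAux

open Filter Topology NNReal

/-- Series coefficients of the Bessel function. -/
def dd (ν : ℝ) (s : ℕ) : ℝ := (-1 : ℝ) ^ s / ((s.factorial : ℝ) * Real.Gamma (ν + (s : ℝ) + 1))

/-- Coefficients of the derivative of a power series. -/
def dshift (c : ℕ → ℝ) (s : ℕ) : ℝ := ((s : ℝ) + 1) * c (s + 1)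

/-- A power series as a function. -/
def psum (c : ℕ → ℝ) (t : ℝ) : ℝ := ∑' s : ℕ, c s * t ^ s

section generic

variable {c : ℕ → ℝ} {A : ℝ}

lemma summable_psum (hc : ∀ s, |c s| ≤ A / s.factorial) (t : ℝ) :
    Summable (fun s : ℕ => c s * t ^ s) := by
  apply Summable.of_norm
  refine Summable.of_nonneg_of_le (fun s => norm_nonneg _) ?_
    ((Real.summable_pow_div_factorial |t|).mul_left A)
  · intro s
    have h1 : ‖c s * t ^ s‖ = |c s| * |t| ^ s := by
      rw [norm_mul, norm_pow, Real.norm_eq_abs, Real.norm_eq_abs]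
    rw [h1]
    calc |c s| * |t| ^ s ≤ (A / s.factorial) * |t| ^ s := by
          apply mul_le_mul_of_nonneg_right (hc s) (by positivity)
      _ = A * (|t| ^ s / s.factorial) := by ring

lemma summable_mul_psum (hc : ∀ s, |c s| ≤ A / s.factorial) (t : ℝ) :
    Summable (fun s : ℕ => (s : ℝ) * (c s * t ^ s)) := by
  have hA : 0 ≤ A := by
    have h := (abs_nonneg (c 0)).trans (hc 0)
    simpa using h
  apply Summable.of_norm
  refine Summable.of_nonneg_of_le (fun s => norm_nonneg _) ?_
    ((Real.summable_pow_div_factorial (2 * (|t| + 1))).mul_left A)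
  · intro s
    have h1 : ‖(s : ℝ) * (c s * t ^ s)‖ = (s : ℝ) * (|c s| * |t| ^ s) := by
      rw [norm_mul, norm_mul, norm_pow, Real.norm_eq_abs, Real.norm_eq_abs, Real.norm_eq_abs,
        abs_of_nonneg (by positivity : (0:ℝ) ≤ (s:ℝ))]
    rw [h1]
    have hs2 : (s : ℝ) ≤ 2 ^ s := by
      exact_mod_cast (Nat.lt_two_pow_self (n := s)).le
    have htp : |t| ^ s ≤ (|t| + 1) ^ s := by
      apply pow_le_pow_left₀ (abs_nonneg t); linarith
    calc (s : ℝ) * (|c s| * |t| ^ s)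
        ≤ (2:ℝ) ^ s * ((A / s.factorial) * (|t| + 1) ^ s) := by
          apply mul_le_mul hs2 _ (by positivity) (by positivity)
          apply mul_le_mul (hc s) htp (by positivity) (by positivity)
      _ = A * ((2 * (|t| + 1)) ^ s / s.factorial) := by
          rw [mul_pow]; ring

lemma dshift_bound (hc : ∀ s, |c s| ≤ A / s.factorial) (s : ℕ) :
    |dshift c s| ≤ A / s.factorial := by
  unfold dshift
  rw [abs_mul, abs_of_nonneg (by positivity : (0:ℝ) ≤ (s : ℝ) + 1)]
  have h := hc (s + 1)
  have hfac : ((s + 1).factorial : ℝ) = ((s : ℝ) + 1) * s.factorial := by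
    rw [Nat.factorial_succ]; push_cast; ring
  calc ((s : ℝ) + 1) * |c (s + 1)| ≤ ((s : ℝ) + 1) * (A / (s + 1).factorial) := by
        apply mul_le_mul_of_nonneg_left h (by positivity)
    _ = A / s.factorial := by
        rw [hfac]; field_simp

lemma hasDerivAt_psum (hc : ∀ s, |c s| ≤ A / s.factorial) (t : ℝ) :
    HasDerivAt (psum c) (psum (dshift c) t) t := by
  have hA : 0 ≤ A := by
    have h := (abs_nonneg (c 0)).trans (hc 0)
    simpa using h
  set R : ℝ := |t| + 1 with hR
  have hR1 : 1 ≤ R := by rw [hR]; linarith [abs_nonneg t]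
  have hR0 : 0 < R := by linarith
  have htR : t ∈ Metric.ball (0:ℝ) R := by
    simp [Metric.mem_ball, Real.dist_eq, hR]
  have hbound : ∀ (s : ℕ) (y : ℝ), y ∈ Metric.ball (0:ℝ) R →
      ‖c s * ((s : ℝ) * y ^ (s - 1))‖ ≤ A * ((2 * R) ^ s / s.factorial) := by
    intro s y hy
    have hyR : |y| ≤ R := by
      simp [Metric.mem_ball, Real.dist_eq] at hy; linarith
    have h1 : ‖c s * ((s : ℝ) * y ^ (s - 1))‖ = |c s| * ((s : ℝ) * |y| ^ (s - 1)) := by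
      rw [norm_mul, norm_mul, norm_pow, Real.norm_eq_abs, Real.norm_eq_abs, Real.norm_eq_abs,
        abs_of_nonneg (by positivity : (0:ℝ) ≤ (s:ℝ))]
    rw [h1]
    have hs2 : (s : ℝ) ≤ 2 ^ s := by exact_mod_cast (Nat.lt_two_pow_self (n := s)).le
    have hy1 : |y| ^ (s - 1) ≤ R ^ (s - 1) := pow_le_pow_left₀ (abs_nonneg y) hyR _
    have hy2 : R ^ (s - 1) ≤ R ^ s := pow_le_pow_right₀ hR1 (Nat.sub_le s 1)
    calc |c s| * ((s : ℝ) * |y| ^ (s - 1))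
        ≤ (A / s.factorial) * ((2:ℝ) ^ s * R ^ s) := by
          apply mul_le_mul (hc s) _ (by positivity) (by positivity)
          apply mul_le_mul hs2 (hy1.trans hy2) (by positivity) (by positivity)
      _ = A * ((2 * R) ^ s / s.factorial) := by rw [mul_pow]; ring
  have hderiv : HasDerivAt (psum c) (∑' s : ℕ, c s * ((s : ℝ) * t ^ (s - 1))) t := by
    apply hasDerivAt_tsum_of_isPreconnected
      (u := fun s => A * ((2 * R) ^ s / s.factorial))
      ((Real.summable_pow_div_factorial (2 * R)).mul_left A)
      Metric.isOpen_ball (convex_ball (0:ℝ) R).isPreconnected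
      (g' := fun s y => c s * ((s : ℝ) * y ^ (s - 1)))
      (fun s y _ => (hasDerivAt_pow s y).const_mul (c s))
      hbound htR (summable_psum hc t) htR
  have hsum : Summable (fun s : ℕ => c s * ((s : ℝ) * t ^ (s - 1))) := by
    apply Summable.of_norm
    apply Summable.of_nonneg_of_le (fun s => norm_nonneg _) (fun s => hbound s t htR)
    exact (Real.summable_pow_div_factorial (2 * R)).mul_left A
  have heq : (∑' s : ℕ, c s * ((s : ℝ) * t ^ (s - 1))) = psum (dshift c) t := by
    rw [hsum.tsum_eq_zero_add]
    simp only [Nat.cast_zero, zero_mul, mul_zero, zero_add, Nat.add_sub_cancel]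
    unfold psum dshift
    apply tsum_congr
    intro s
    push_cast
    ring
  rw [← heq]
  exact hderiv

end generic

section nu

variable {ν : ℝ}

lemma gamma_ge (hν : 0 < ν) (s : ℕ) :
    (s.factorial : ℝ) * Real.Gamma (ν + 1) ≤ Real.Gamma (ν + (s : ℝ) + 1) := by
  induction s with
  | zero => simp
  | succ k ih =>
    have hpos : (0:ℝ) < ν + (k : ℝ) + 1 := by positivity
    have hG : Real.Gamma (ν + ((k : ℝ) + 1) + 1) = (ν + (k : ℝ) + 1) * Real.Gamma (ν + (k : ℝ) + 1) := by
      have h : ν + ((k : ℝ) + 1) + 1 = (ν + (k : ℝ) + 1) + 1 := by ring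
      rw [h, Real.Gamma_add_one (ne_of_gt hpos)]
    have hGpos : 0 < Real.Gamma (ν + (k : ℝ) + 1) := Real.Gamma_pos_of_pos (by positivity)
    have hfac : ((k + 1).factorial : ℝ) = ((k : ℝ) + 1) * k.factorial := by
      rw [Nat.factorial_succ]; push_cast; ring
    push_cast
    rw [hG, hfac]
    have hGpos1 : 0 < Real.Gamma (ν + 1) := Real.Gamma_pos_of_pos (by positivity)
    nlinarith [(Nat.cast_pos (α := ℝ)).mpr (Nat.factorial_pos k)]

lemma dd_bound (hν : 0 < ν) (s : ℕ) :
    |dd ν s| ≤ (1 / Real.Gamma (ν + 1)) / s.factorial := by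
  have hGpos : 0 < Real.Gamma (ν + (s : ℝ) + 1) := Real.Gamma_pos_of_pos (by positivity)
  have hGpos1 : 0 < Real.Gamma (ν + 1) := Real.Gamma_pos_of_pos (by positivity)
  have hfacpos : (0:ℝ) < s.factorial := by exact_mod_cast Nat.factorial_pos s
  have h1 : |dd ν s| = 1 / ((s.factorial : ℝ) * Real.Gamma (ν + (s : ℝ) + 1)) := by
    unfold dd
    rw [abs_div, abs_pow, abs_neg, abs_one, one_pow, abs_of_pos (by positivity)]
  rw [h1, div_div]
  have hge := gamma_ge hν s
  have hfac1 : (1:ℝ) ≤ s.factorial := by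
    exact_mod_cast Nat.one_le_iff_ne_zero.mpr (Nat.factorial_ne_zero s)
  apply one_div_le_one_div_of_le (by positivity)
  nlinarith

lemma coeff_rec (hν : 0 < ν) (s : ℕ) :
    (s : ℝ) * dshift (dd ν) s + (ν + 1) * dshift (dd ν) s + dd ν s = 0 := by
  unfold dshift dd
  have hpos : (0:ℝ) < ν + (s : ℝ) + 1 := by positivity
  have hG : Real.Gamma (ν + ((s : ℕ) + 1 : ℕ) + 1) = (ν + (s : ℝ) + 1) * Real.Gamma (ν + (s : ℝ) + 1) := by
    push_cast
    have h : ν + ((s : ℝ) + 1) + 1 = (ν + (s : ℝ) + 1) + 1 := by ring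
    rw [h, Real.Gamma_add_one (ne_of_gt hpos)]
  have hfac : (((s : ℕ) + 1).factorial : ℝ) = ((s : ℝ) + 1) * s.factorial := by
    rw [Nat.factorial_succ]; push_cast; ring
  rw [hG, hfac]
  have hGpos : 0 < Real.Gamma (ν + (s : ℝ) + 1) := Real.Gamma_pos_of_pos (by positivity)
  have hfacpos : (0:ℝ) < s.factorial := by exact_mod_cast Nat.factorial_pos s
  have hpow : (-1 : ℝ) ^ ((s : ℕ) + 1) = -(-1 : ℝ) ^ s := by rw [pow_succ]; ring
  rw [hpow]
  field_simp
  ring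

/-- `P`, `P₁`, `P₂`: the entire part of the Bessel function and its first two derivatives. -/
def P (ν : ℝ) : ℝ → ℝ := psum (dd ν)
def P1 (ν : ℝ) : ℝ → ℝ := psum (dshift (dd ν))
def P2 (ν : ℝ) : ℝ → ℝ := psum (dshift (dshift (dd ν)))

lemma hasDerivAt_P (hν : 0 < ν) (t : ℝ) : HasDerivAt (P ν) (P1 ν t) t :=
  hasDerivAt_psum (dd_bound hν) t

lemma hasDerivAt_P1 (hν : 0 < ν) (t : ℝ) : HasDerivAt (P1 ν) (P2 ν t) t :=
  hasDerivAt_psum (dshift_bound (dd_bound hν)) t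

lemma psum_ODE (hν : 0 < ν) (t : ℝ) :
    t * P2 ν t + (ν + 1) * P1 ν t + P ν t = 0 := by
  set c : ℕ → ℝ := dd ν
  set c1 : ℕ → ℝ := dshift c
  set c2 : ℕ → ℝ := dshift c1
  have hb : ∀ s, |c1 s| ≤ (1 / Real.Gamma (ν + 1)) / s.factorial := dshift_bound (dd_bound hν)
  have hsum1 : Summable (fun s : ℕ => (s : ℝ) * (c1 s * t ^ s)) := summable_mul_psum hb t
  have hsum2 : Summable (fun s : ℕ => (ν + 1) * (c1 s * t ^ s)) :=
    (summable_psum hb t).mul_left _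
  have hsum3 : Summable (fun s : ℕ => c s * t ^ s) := summable_psum (dd_bound hν) t
  have e1 : t * P2 ν t = ∑' s : ℕ, (s : ℝ) * (c1 s * t ^ s) := by
    calc t * P2 ν t = ∑' s : ℕ, t * (c2 s * t ^ s) := by rw [P2, psum, _root_.tsum_mul_left]
      _ = ∑' s : ℕ, (((s : ℕ) + 1 : ℕ) : ℝ) * (c1 ((s : ℕ) + 1) * t ^ ((s : ℕ) + 1)) := by
          apply tsum_congr
          intro s
          show t * (dshift c1 s * t ^ s) = _
          unfold dshift
          push_cast
          ring
      _ = ∑' s : ℕ, (s : ℝ) * (c1 s * t ^ s) := by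
          rw [hsum1.tsum_eq_zero_add]
          norm_num
  have e2 : (ν + 1) * P1 ν t = ∑' s : ℕ, (ν + 1) * (c1 s * t ^ s) := by
    rw [P1, psum, _root_.tsum_mul_left]
  have e3 : P ν t = ∑' s : ℕ, c s * t ^ s := rfl
  rw [e1, e2, e3, ← hsum1.tsum_add hsum2, ← (hsum1.add hsum2).tsum_add hsum3]
  have hzero : ∀ s : ℕ, (s : ℝ) * (c1 s * t ^ s) + (ν + 1) * (c1 s * t ^ s) + c s * t ^ s = 0 := by
    intro s
    have h := coeff_rec hν s
    calc (s : ℝ) * (c1 s * t ^ s) + (ν + 1) * (c1 s * t ^ s) + c s * t ^ s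
        = ((s : ℝ) * c1 s + (ν + 1) * c1 s + c s) * t ^ s := by ring
      _ = 0 * t ^ s := by rw [h]
      _ = 0 := zero_mul _
  calc (∑' s : ℕ, ((s : ℝ) * (c1 s * t ^ s) + (ν + 1) * (c1 s * t ^ s) + c s * t ^ s))
      = ∑' _ : ℕ, (0:ℝ) := tsum_congr hzero
    _ = 0 := tsum_zero

/-- Explicit forms of the Bessel function and its first two derivatives on `(0,∞)`. -/
def Bf (ν : ℝ) (x : ℝ) : ℝ := (x / 2) ^ ν * P ν ((x / 2) ^ 2)
def Bf1 (ν : ℝ) (x : ℝ) : ℝ :=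
  (x / 2) ^ ν * (ν / x * P ν ((x / 2) ^ 2) + x / 2 * P1 ν ((x / 2) ^ 2))
def Bf2 (ν : ℝ) (x : ℝ) : ℝ := -(Bf1 ν x) / x - (1 - ν ^ 2 / x ^ 2) * Bf ν x

lemma besselJ_eq (hν : 0 < ν) {x : ℝ} (hx : 0 < x) : besselJ ν x = Bf ν x := by
  have hx2 : (0:ℝ) < x / 2 := by linarith
  unfold besselJ Bf P psum
  rw [← _root_.tsum_mul_left]
  apply tsum_congr
  intro s
  have h1 : (x / 2) ^ (2 * (s : ℝ) + ν) = ((x / 2) ^ 2) ^ s * (x / 2) ^ ν := by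
    rw [Real.rpow_add hx2]
    congr 1
    rw [show (2 * (s : ℝ)) = ((2 * s : ℕ) : ℝ) by push_cast; ring, Real.rpow_natCast, pow_mul]
  rw [h1]
  unfold dd
  ring

lemma hasDerivAt_half (x : ℝ) : HasDerivAt (fun y : ℝ => y / 2) (1 / 2) x := by
  simpa using (hasDerivAt_id x).div_const 2

lemma hasDerivAt_sq (x : ℝ) : HasDerivAt (fun y : ℝ => (y / 2) ^ 2) (x / 2) x := by
  have h := (hasDerivAt_half x).pow 2
  refine HasDerivAt.congr_deriv h ?_
  ring

lemma hasDerivAt_rpow_half (hν : 0 < ν) {x : ℝ} (hx : 0 < x) :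
    HasDerivAt (fun y : ℝ => (y / 2) ^ ν) (ν / x * (x / 2) ^ ν) x := by
  have hx2 : (0:ℝ) < x / 2 := by linarith
  have h := (Real.hasDerivAt_rpow_const (x := x / 2) (p := ν)
    (Or.inl (ne_of_gt hx2))).comp x (hasDerivAt_half x)
  refine HasDerivAt.congr_deriv h ?_
  rw [Real.rpow_sub hx2, Real.rpow_one]
  field_simp

lemma hasDerivAt_Bf (hν : 0 < ν) {x : ℝ} (hx : 0 < x) :
    HasDerivAt (Bf ν) (Bf1 ν x) x := by
  have hPt : HasDerivAt (fun y : ℝ => P ν ((y / 2) ^ 2)) (P1 ν ((x / 2) ^ 2) * (x / 2)) x :=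
    (hasDerivAt_P hν _).comp x (hasDerivAt_sq x)
  have h := (hasDerivAt_rpow_half hν hx).mul hPt
  refine HasDerivAt.congr_deriv h ?_
  unfold Bf1
  ring

lemma hasDerivAt_Bf1 (hν : 0 < ν) {x : ℝ} (hx : 0 < x) :
    HasDerivAt (Bf1 ν) (Bf2 ν x) x := by
  have hx0 : x ≠ 0 := ne_of_gt hx
  have hPt : HasDerivAt (fun y : ℝ => P ν ((y / 2) ^ 2)) (P1 ν ((x / 2) ^ 2) * (x / 2)) x :=
    (hasDerivAt_P hν _).comp x (hasDerivAt_sq x)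
  have hP1t : HasDerivAt (fun y : ℝ => P1 ν ((y / 2) ^ 2)) (P2 ν ((x / 2) ^ 2) * (x / 2)) x :=
    (hasDerivAt_P1 hν _).comp x (hasDerivAt_sq x)
  have hq : HasDerivAt (fun y : ℝ => ν / y) (-(ν / x ^ 2)) x := by
    have h := (hasDerivAt_inv hx0).const_mul ν
    have hfn : (fun y : ℝ => ν * y⁻¹) = fun y : ℝ => ν / y := by
      funext y; rw [div_eq_mul_inv]
    rw [hfn] at h
    refine HasDerivAt.congr_deriv h ?_
    field_simp
  have hin : HasDerivAt
      (fun y : ℝ => ν / y * P ν ((y / 2) ^ 2) + y / 2 * P1 ν ((y / 2) ^ 2))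
      ((-(ν / x ^ 2)) * P ν ((x / 2) ^ 2) + ν / x * (P1 ν ((x / 2) ^ 2) * (x / 2))
        + (1 / 2 * P1 ν ((x / 2) ^ 2) + x / 2 * (P2 ν ((x / 2) ^ 2) * (x / 2)))) x :=
    (hq.mul hPt).add ((hasDerivAt_half x).mul hP1t)
  have h := (hasDerivAt_rpow_half hν hx).mul hin
  have hBf1fn : Bf1 ν = fun y : ℝ =>
      (y / 2) ^ ν * (ν / y * P ν ((y / 2) ^ 2) + y / 2 * P1 ν ((y / 2) ^ 2)) := rfl
  rw [hBf1fn]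
  refine HasDerivAt.congr_deriv h ?_
  have hO := psum_ODE hν ((x / 2) ^ 2)
  have hp : P ν ((x / 2) ^ 2) =
      -((x / 2) ^ 2 * P2 ν ((x / 2) ^ 2) + (ν + 1) * P1 ν ((x / 2) ^ 2)) := by linarith
  unfold Bf2 Bf1 Bf
  rw [hp]
  have hg0 : (x / 2) ^ ν ≠ 0 := by
    apply ne_of_gt
    apply Real.rpow_pos_of_pos
    linarith
  field_simp
  ring

lemma bessel_vec_zero (hν : 0 < ν) {c₀ aa : ℝ} (hc₀ : 0 < c₀) (hca : c₀ ≤ aa)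
    (h0 : Bf ν aa = 0) (h1 : Bf1 ν aa = 0) : Bf ν c₀ = 0 := by
  classical
  set vf : ℝ → ℝ × ℝ → ℝ × ℝ := fun t p =>
    (p.2, -p.2 / (max t c₀) - (1 - ν ^ 2 / (max t c₀) ^ 2) * p.1) with hvf
  set Kr : ℝ := 1 / c₀ + (1 + ν ^ 2 / c₀ ^ 2) + 1 with hKr
  have hKr0 : 0 ≤ Kr := by positivity
  have hKco : ((Real.toNNReal Kr : ℝ≥0) : ℝ) = Kr := Real.coe_toNNReal Kr hKr0
  have hlip : ∀ t, LipschitzOnWith (Real.toNNReal Kr) (vf t) (univ : Set (ℝ × ℝ)) := by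
    intro t
    apply LipschitzWith.lipschitzOnWith
    apply LipschitzWith.of_dist_le_mul
    intro p q
    set x := max t c₀ with hxdef
    have hxc : c₀ ≤ x := le_max_right t c₀
    have hx0 : 0 < x := lt_of_lt_of_le hc₀ hxc
    rw [Prod.dist_eq, Prod.dist_eq, hKco]
    set D := max (dist p.1 q.1) (dist p.2 q.2) with hD
    have hd1 : dist p.1 q.1 ≤ D := le_max_left _ _
    have hd2 : dist p.2 q.2 ≤ D := le_max_right _ _
    have hD0 : 0 ≤ D := le_trans dist_nonneg hd1
    have hKr1 : 1 ≤ Kr := by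
      rw [hKr]
      have h1 : 0 ≤ 1 / c₀ := by positivity
      have h2 : 0 ≤ ν ^ 2 / c₀ ^ 2 := by positivity
      linarith
    apply max_le
    · calc dist (vf t p).1 (vf t q).1 = dist p.2 q.2 := rfl
        _ ≤ D := hd2
        _ = 1 * D := (one_mul D).symm
        _ ≤ Kr * D := by apply mul_le_mul_of_nonneg_right hKr1 hD0
    · have hre : dist (vf t p).2 (vf t q).2
          = |(-(p.2 - q.2)) / x - (1 - ν ^ 2 / x ^ 2) * (p.1 - q.1)| := by
        rw [Real.dist_eq]
        congr 1
        show (-p.2 / x - (1 - ν ^ 2 / x ^ 2) * p.1) - (-q.2 / x - (1 - ν ^ 2 / x ^ 2) * q.1) = _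
        ring
      rw [hre]
      have habs : |(-(p.2 - q.2)) / x - (1 - ν ^ 2 / x ^ 2) * (p.1 - q.1)|
          ≤ |p.2 - q.2| / x + |1 - ν ^ 2 / x ^ 2| * |p.1 - q.1| := by
        calc |(-(p.2 - q.2)) / x - (1 - ν ^ 2 / x ^ 2) * (p.1 - q.1)|
            ≤ |(-(p.2 - q.2)) / x| + |(1 - ν ^ 2 / x ^ 2) * (p.1 - q.1)| := abs_sub _ _
          _ = |p.2 - q.2| / x + |1 - ν ^ 2 / x ^ 2| * |p.1 - q.1| := by
              rw [abs_div, abs_neg, abs_mul, abs_of_pos hx0]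
      have hxx : ν ^ 2 / x ^ 2 ≤ ν ^ 2 / c₀ ^ 2 := by
        apply div_le_div_of_nonneg_left (sq_nonneg ν) (by positivity)
        nlinarith
      have hxx0 : 0 ≤ ν ^ 2 / x ^ 2 := by positivity
      have hcoef : |1 - ν ^ 2 / x ^ 2| ≤ 1 + ν ^ 2 / c₀ ^ 2 := by
        rw [abs_le]
        constructor <;> nlinarith
      have h2x : |p.2 - q.2| / x ≤ D * (1 / c₀) := by
        rw [div_eq_mul_inv, ← one_div]
        apply mul_le_mul (by rw [← Real.dist_eq]; exact hd2) _ (by positivity) hD0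
        apply one_div_le_one_div_of_le hc₀ hxc
      have h1x : |1 - ν ^ 2 / x ^ 2| * |p.1 - q.1| ≤ (1 + ν ^ 2 / c₀ ^ 2) * D := by
        apply mul_le_mul hcoef (by rw [← Real.dist_eq]; exact hd1) (abs_nonneg _) (by positivity)
      calc |(-(p.2 - q.2)) / x - (1 - ν ^ 2 / x ^ 2) * (p.1 - q.1)|
          ≤ |p.2 - q.2| / x + |1 - ν ^ 2 / x ^ 2| * |p.1 - q.1| := habs
        _ ≤ D * (1 / c₀) + (1 + ν ^ 2 / c₀ ^ 2) * D := add_le_add h2x h1x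
        _ ≤ Kr * D := by rw [hKr]; nlinarith
  set V : ℝ → ℝ × ℝ := fun t => (Bf ν t, Bf1 ν t) with hV
  have hVd : ∀ t ∈ Ioc c₀ aa, HasDerivWithinAt V (vf t (V t)) (Iic t) t := by
    intro t ht
    have ht0 : 0 < t := lt_trans hc₀ ht.1
    have hmax : max t c₀ = t := max_eq_left (le_of_lt ht.1)
    have hd : HasDerivAt V (Bf1 ν t, Bf2 ν t) t :=
      (hasDerivAt_Bf hν ht0).prodMk (hasDerivAt_Bf1 hν ht0)
    have : vf t (V t) = (Bf1 ν t, Bf2 ν t) := by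
      simp only [hvf, hV, hmax]
      rfl
    rw [this]
    exact hd.hasDerivWithinAt
  have hVc : ContinuousOn V (Icc c₀ aa) := by
    apply continuousOn_of_forall_continuousAt
    intro t ht
    have ht0 : 0 < t := lt_of_lt_of_le hc₀ ht.1
    exact ((hasDerivAt_Bf hν ht0).prodMk (hasDerivAt_Bf1 hν ht0)).continuousAt
  have hgd : ∀ t ∈ Ioc c₀ aa, HasDerivWithinAt (fun _ : ℝ => ((0:ℝ), (0:ℝ)))
      (vf t ((0:ℝ), (0:ℝ))) (Iic t) t := by
    intro t ht
    have : vf t ((0:ℝ), (0:ℝ)) = ((0:ℝ), (0:ℝ)) := by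
      simp [hvf]
    rw [this]
    exact (hasDerivAt_const t _).hasDerivWithinAt
  have heq := ODE_solution_unique_of_mem_Icc_left (fun t _ => hlip t) hVc hVd
    (fun t _ => mem_univ _) continuousOn_const hgd (fun t _ => mem_univ _)
    (by rw [hV]; simp only; rw [h0, h1])
  have := heq (left_mem_Icc.mpr hca)
  simpa [hV] using congrArg Prod.fst this

/-- If `f` vanishes at `a`, is positive just to the right, then its derivative at `a`
is nonnegative. -/
lemma deriv_nonneg_right {f : ℝ → ℝ} {f' aa bb : ℝ} (hd : HasDerivAt f f' aa)
    (h0 : f aa = 0) (hab : aa < bb) (hfp : ∀ x ∈ Ioo aa bb, 0 < f x) : 0 ≤ f' := by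
  by_contra hlt
  push_neg at hlt
  have ht := hasDerivAt_iff_tendsto_slope.mp hd
  have hev : ∀ᶠ x in 𝓝[≠] aa, slope f aa x < 0 := ht.eventually_lt_const hlt
  have hle : 𝓝[>] aa ≤ 𝓝[≠] aa := nhdsWithin_mono aa (fun x hx => ne_of_gt hx)
  have hev' : ∀ᶠ x in 𝓝[>] aa, slope f aa x < 0 := hev.filter_mono hle
  have hIoo : Ioo aa bb ∈ 𝓝[>] aa := Ioo_mem_nhdsGT hab
  obtain ⟨x, hx1, hx2⟩ := (hev'.and (eventually_mem_set.mpr hIoo)).exists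
  rw [slope_def_field, h0, sub_zero] at hx1
  have hxa : 0 < x - aa := by have := hx2.1; linarith
  have : f x < 0 := by
    have := (div_neg_iff).mp hx1
    rcases this with ⟨h1, h2⟩ | ⟨h1, h2⟩
    · linarith
    · exact h1
  exact absurd (hfp x hx2) (by linarith)

/-- If `f` vanishes at `b`, is positive just to the left, then its derivative at `b`
is nonpositive. -/
lemma deriv_nonpos_left {f : ℝ → ℝ} {f' aa bb : ℝ} (hd : HasDerivAt f f' bb)
    (h0 : f bb = 0) (hab : aa < bb) (hfp : ∀ x ∈ Ioo aa bb, 0 < f x) : f' ≤ 0 := by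
  by_contra hlt
  push_neg at hlt
  have ht := hasDerivAt_iff_tendsto_slope.mp hd
  have hev : ∀ᶠ x in 𝓝[≠] bb, 0 < slope f bb x := ht.eventually_const_lt hlt
  have hle : 𝓝[<] bb ≤ 𝓝[≠] bb := nhdsWithin_mono bb (fun x hx => ne_of_lt hx)
  have hev' : ∀ᶠ x in 𝓝[<] bb, 0 < slope f bb x := hev.filter_mono hle
  have hIoo : Ioo aa bb ∈ 𝓝[<] bb := Ioo_mem_nhdsLT hab
  obtain ⟨x, hx1, hx2⟩ := (hev'.and (eventually_mem_set.mpr hIoo)).exists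
  rw [slope_def_field, h0, sub_zero] at hx1
  have hxb : x - bb < 0 := by have := hx2.2; linarith
  have : f x < 0 := by
    have := (div_pos_iff).mp hx1
    rcases this with ⟨h1, h2⟩ | ⟨h1, h2⟩
    · linarith
    · exact h1
  exact absurd (hfp x hx2) (by linarith)

lemma hasDerivAt_besselJ (hν : 0 < ν) {x : ℝ} (hx : 0 < x) :
    HasDerivAt (besselJ ν) (Bf1 ν x) x := by
  have heq : besselJ ν =ᶠ[𝓝 x] Bf ν :=
    Filter.eventuallyEq_of_mem (Ioi_mem_nhds hx) (fun y hy => besselJ_eq hν hy)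
  exact (hasDerivAt_Bf hν hx).congr_of_eventuallyEq heq

end nu

/-- The derivative of `x ↦ √(π/(2x))`. -/
def Cd (x : ℝ) : ℝ := 1 / (2 * Real.sqrt (Real.pi / (2 * x))) * (Real.pi / 2 * -(x ^ 2)⁻¹)

/-- The derivative of the spherical Bessel function. -/
def SD (m : ℕ) (x : ℝ) : ℝ :=
  Cd x * besselJ ((m : ℝ) + 1 / 2) x
    + Real.sqrt (Real.pi / (2 * x)) * Bf1 ((m : ℝ) + 1 / 2) x

lemma hasDerivAt_sqrtfac {x : ℝ} (hx : 0 < x) :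
    HasDerivAt (fun y : ℝ => Real.sqrt (Real.pi / (2 * y))) (Cd x) x := by
  have hu : HasDerivAt (fun y : ℝ => Real.pi / (2 * y)) (Real.pi / 2 * -(x ^ 2)⁻¹) x := by
    have h := (hasDerivAt_inv (ne_of_gt hx)).const_mul (Real.pi / 2)
    have hfn : (fun y : ℝ => Real.pi / 2 * y⁻¹) = fun y : ℝ => Real.pi / (2 * y) := by
      funext y
      rw [div_eq_mul_inv, div_eq_mul_inv, mul_inv]
      ring
    rw [hfn] at h
    exact h
  exact (Real.hasDerivAt_sqrt (ne_of_gt (by positivity : (0:ℝ) < Real.pi / (2 * x)))).comp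
    x hu

lemma hasDerivAt_sphBesselJ (m : ℕ) {x : ℝ} (hx : 0 < x) :
    HasDerivAt (sphBesselJ m) (SD m x) x := by
  have hν : (0:ℝ) < (m : ℝ) + 1 / 2 := by positivity
  have h := (hasDerivAt_sqrtfac hx).mul (hasDerivAt_besselJ hν hx)
  exact h

lemma deriv_sphBesselJ (m : ℕ) {x : ℝ} (hx : 0 < x) :
    deriv (sphBesselJ m) x = SD m x :=
  (hasDerivAt_sphBesselJ m hx).deriv

lemma continuousOn_SD (m : ℕ) : ContinuousOn (SD m) (Ioi 0) := by
  have hν : (0:ℝ) < (m : ℝ) + 1 / 2 := by positivity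
  apply continuousOn_of_forall_continuousAt
  intro x hx
  rw [mem_Ioi] at hx
  have hsqpos : 0 < Real.sqrt (Real.pi / (2 * x)) :=
    Real.sqrt_pos.mpr (by positivity)
  have h1 : ContinuousAt (fun y : ℝ => Real.sqrt (Real.pi / (2 * y))) x :=
    (hasDerivAt_sqrtfac hx).continuousAt
  have hCd : ContinuousAt Cd x := by
    unfold Cd
    apply ContinuousAt.mul
    · exact continuousAt_const.div (continuousAt_const.mul h1) (by positivity)
    · exact continuousAt_const.mul
        (((continuousAt_id.pow 2).inv₀ (pow_ne_zero 2 (ne_of_gt hx))).neg)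
  have hJ : ContinuousAt (besselJ ((m : ℝ) + 1 / 2)) x :=
    (hasDerivAt_besselJ hν hx).continuousAt
  have hB1 : ContinuousAt (Bf1 ((m : ℝ) + 1 / 2)) x :=
    (hasDerivAt_Bf1 hν hx).continuousAt
  exact ((hCd.mul hJ).add (h1.mul hB1))

end BesselProofAux

open BesselProofAux in
/-- Existence of a root of the three-dimensional transmission-eigenvalue characteristic
function `f(k) = J_{m+1/2}(kn/√σ)·j_m'(k) − √σ·n·j_m'(kn/√σ)·J_{m+1/2}(k)` in the interval
`(√σ·a/n, √σ·b/n)`, where `a < b` are consecutive positive zeros of `J_{m+1/2}` and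
`√σ·b/n` lies below the first positive zero of `J_{m+1/2}`. -/
theorem characteristic_root_3d_constant
    (σ n : ℝ) (hσ : 0 < σ) (hn : 0 < n) (hns : Real.sqrt σ < n)
    (m : ℕ) (hm : 1 ≤ m)
    (a b : ℝ) (ha : 0 < a) (hab : a < b)
    (hJa : besselJ ((m : ℝ) + 1 / 2) a = 0) (hJb : besselJ ((m : ℝ) + 1 / 2) b = 0)
    (hJab : ∀ r ∈ Ioo a b, besselJ ((m : ℝ) + 1 / 2) r ≠ 0)
    (hpos : ∀ r ∈ Ioc 0 (Real.sqrt σ * b / n), 0 < besselJ ((m : ℝ) + 1 / 2) r) :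
    ∃ k ∈ Ioo (Real.sqrt σ * a / n) (Real.sqrt σ * b / n),
      besselJ ((m : ℝ) + 1 / 2) (k * n / Real.sqrt σ) * deriv (sphBesselJ m) k
        - Real.sqrt σ * n * deriv (sphBesselJ m) (k * n / Real.sqrt σ)
          * besselJ ((m : ℝ) + 1 / 2) k = 0 := by
  have hν : (0:ℝ) < (m : ℝ) + 1 / 2 := by positivity
  set s := Real.sqrt σ with hs_def
  have hs : 0 < s := Real.sqrt_pos.mpr hσ
  set k₁ := s * a / n with hk1_def
  set k₂ := s * b / n with hk2_def
  have hb0 : 0 < b := lt_trans ha hab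
  have hk₁ : 0 < k₁ := by rw [hk1_def]; positivity
  have hk₂ : 0 < k₂ := by rw [hk2_def]; positivity
  have hk12 : k₁ < k₂ := by
    rw [hk1_def, hk2_def]
    apply div_lt_div_of_pos_right ?_ hn
    nlinarith
  have hk2b : k₂ < b := by
    rw [hk2_def, div_lt_iff₀ hn]
    nlinarith
  have hk2a : k₂ < a := by
    by_contra h
    push_neg at h
    have := hpos a ⟨ha, h⟩
    rw [hJa] at this
    exact lt_irrefl 0 this
  have hk1a : k₁ * n / s = a := by
    rw [hk1_def]
    field_simp
  have hk2b' : k₂ * n / s = b := by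
    rw [hk2_def]
    field_simp
  -- continuity facts
  have hJc : ContinuousOn (besselJ ((m : ℝ) + 1 / 2)) (Ioi 0) :=
    continuousOn_of_forall_continuousAt
      (fun x hx => (hasDerivAt_besselJ hν hx).continuousAt)
  have hDc : ContinuousOn (deriv (sphBesselJ m)) (Ioi 0) :=
    (continuousOn_SD m).congr (fun x hx => deriv_sphBesselJ m hx)
  set F : ℝ → ℝ := fun k =>
    besselJ ((m : ℝ) + 1 / 2) (k * n / s) * deriv (sphBesselJ m) k
      - s * n * deriv (sphBesselJ m) (k * n / s) * besselJ ((m : ℝ) + 1 / 2) k with hF_def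
  have hmap0 : MapsTo (fun k : ℝ => k) (Icc k₁ k₂) (Ioi 0) :=
    fun k hk => mem_Ioi.mpr (lt_of_lt_of_le hk₁ hk.1)
  have hmap2 : MapsTo (fun k : ℝ => k * n / s) (Icc k₁ k₂) (Ioi 0) := by
    intro k hk
    have hk0 : 0 < k := lt_of_lt_of_le hk₁ hk.1
    exact mem_Ioi.mpr (div_pos (mul_pos hk0 hn) hs)
  have hinner : ContinuousOn (fun k : ℝ => k * n / s) (Icc k₁ k₂) :=
    ((continuous_id.mul continuous_const).div_const s).continuousOn
  have hFc : ContinuousOn F (Icc k₁ k₂) := by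
    apply ContinuousOn.sub
    · exact (hJc.comp hinner hmap2).mul (hDc.comp continuousOn_id hmap0)
    · exact (continuousOn_const.mul (hDc.comp hinner hmap2)).mul
        (hJc.comp continuousOn_id hmap0)
  -- values at endpoints
  have hJk1 : 0 < besselJ ((m : ℝ) + 1 / 2) k₁ := hpos k₁ ⟨hk₁, le_of_lt hk12⟩
  have hJk2 : 0 < besselJ ((m : ℝ) + 1 / 2) k₂ := hpos k₂ ⟨hk₂, le_refl k₂⟩
  have hDa : deriv (sphBesselJ m) a
      = Real.sqrt (Real.pi / (2 * a)) * Bf1 ((m : ℝ) + 1 / 2) a := by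
    rw [deriv_sphBesselJ m ha]
    unfold BesselProofAux.SD
    rw [hJa]
    ring
  have hDb : deriv (sphBesselJ m) b
      = Real.sqrt (Real.pi / (2 * b)) * Bf1 ((m : ℝ) + 1 / 2) b := by
    rw [deriv_sphBesselJ m hb0]
    unfold BesselProofAux.SD
    rw [hJb]
    ring
  have hFk1 : F k₁ = -(s * n * Real.sqrt (Real.pi / (2 * a))
      * besselJ ((m : ℝ) + 1 / 2) k₁) * Bf1 ((m : ℝ) + 1 / 2) a := by
    rw [hF_def]
    simp only
    rw [hk1a, hJa, hDa]
    ring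
  have hFk2 : F k₂ = -(s * n * Real.sqrt (Real.pi / (2 * b))
      * besselJ ((m : ℝ) + 1 / 2) k₂) * Bf1 ((m : ℝ) + 1 / 2) b := by
    rw [hF_def]
    simp only
    rw [hk2b', hJb, hDb]
    ring
  -- simplicity of the zeros at `a` and `b`
  have hBfa : Bf ((m : ℝ) + 1 / 2) a = 0 := by
    rw [← besselJ_eq hν ha]; exact hJa
  have hBfb : Bf ((m : ℝ) + 1 / 2) b = 0 := by
    rw [← besselJ_eq hν hb0]; exact hJb
  have hBf1a : Bf1 ((m : ℝ) + 1 / 2) a ≠ 0 := by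
    intro h
    have h0 := bessel_vec_zero hν hk₂ (le_of_lt hk2a) hBfa h
    have : besselJ ((m : ℝ) + 1 / 2) k₂ = 0 := by rw [besselJ_eq hν hk₂]; exact h0
    rw [this] at hJk2
    exact lt_irrefl 0 hJk2
  have hBf1b : Bf1 ((m : ℝ) + 1 / 2) b ≠ 0 := by
    intro h
    have h0 := bessel_vec_zero hν hk₂ (le_of_lt hk2b) hBfb h
    have : besselJ ((m : ℝ) + 1 / 2) k₂ = 0 := by rw [besselJ_eq hν hk₂]; exact h0
    rw [this] at hJk2
    exact lt_irrefl 0 hJk2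
  have hsq_a : 0 < Real.sqrt (Real.pi / (2 * a)) := Real.sqrt_pos.mpr (by positivity)
  have hsq_b : 0 < Real.sqrt (Real.pi / (2 * b)) := Real.sqrt_pos.mpr (by positivity)
  -- the sign of `besselJ` is constant on `(a, b)`
  have hdichot : (∀ x ∈ Ioo a b, 0 < besselJ ((m : ℝ) + 1 / 2) x)
      ∨ (∀ x ∈ Ioo a b, besselJ ((m : ℝ) + 1 / 2) x < 0) := by
    by_cases hcase : ∀ x ∈ Ioo a b, 0 < besselJ ((m : ℝ) + 1 / 2) x
    · exact Or.inl hcase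
    right
    push_neg at hcase
    obtain ⟨x₁, hx₁, hx₁le⟩ := hcase
    have hx₁lt : besselJ ((m : ℝ) + 1 / 2) x₁ < 0 := lt_of_le_of_ne hx₁le (hJab x₁ hx₁)
    intro x hx
    by_contra hge
    push_neg at hge
    have hxlt : 0 < besselJ ((m : ℝ) + 1 / 2) x :=
      lt_of_le_of_ne hge (Ne.symm (hJab x hx))
    have hsub : uIcc x₁ x ⊆ Ioo a b := by
      intro y hy
      rw [Set.mem_uIcc] at hy
      obtain ⟨hx₁1, hx₁2⟩ := hx₁
      obtain ⟨hxa, hxb⟩ := hx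
      rcases hy with ⟨h1, h2⟩ | ⟨h1, h2⟩
      · exact ⟨lt_of_lt_of_le hx₁1 h1, lt_of_le_of_lt h2 hxb⟩
      · exact ⟨lt_of_lt_of_le hxa h1, lt_of_le_of_lt h2 hx₁2⟩
    have hcont : ContinuousOn (besselJ ((m : ℝ) + 1 / 2)) (uIcc x₁ x) :=
      hJc.mono (fun y hy => mem_Ioi.mpr (lt_trans ha (hsub hy).1))
    have h0mem : (0:ℝ) ∈ uIcc (besselJ ((m : ℝ) + 1 / 2) x₁)
        (besselJ ((m : ℝ) + 1 / 2) x) := by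
      rw [Set.mem_uIcc]
      exact Or.inl ⟨le_of_lt hx₁lt, le_of_lt hxlt⟩
    obtain ⟨x₀, hx₀mem, hx₀⟩ := intermediate_value_uIcc hcont h0mem
    exact hJab x₀ (hsub hx₀mem) hx₀
  rcases hdichot with hcase | hcase
  · -- besselJ positive on (a, b)
    have hBa_pos : 0 < Bf1 ((m : ℝ) + 1 / 2) a :=
      lt_of_le_of_ne
        (deriv_nonneg_right (hasDerivAt_besselJ hν ha) hJa hab hcase)
        (Ne.symm hBf1a)
    have hBb_neg : Bf1 ((m : ℝ) + 1 / 2) b < 0 :=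
      lt_of_le_of_ne
        (deriv_nonpos_left (hasDerivAt_besselJ hν hb0) hJb hab hcase)
        hBf1b
    have hF1 : F k₁ < 0 := by
      rw [hFk1]
      nlinarith [mul_pos (mul_pos (mul_pos (mul_pos hs hn) hsq_a) hJk1) hBa_pos]
    have hF2 : 0 < F k₂ := by
      rw [hFk2]
      nlinarith [mul_pos (mul_pos (mul_pos hs hn) hsq_b) hJk2]
    obtain ⟨k, hk, hFk⟩ := intermediate_value_Ioo (le_of_lt hk12) hFc ⟨hF1, hF2⟩
    exact ⟨k, hk, hFk⟩
  · -- besselJ negative on (a, b)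
    have hnegpos : ∀ x ∈ Ioo a b, 0 < -besselJ ((m : ℝ) + 1 / 2) x := by
      intro x hx
      have := hcase x hx
      linarith
    have hBa_neg : Bf1 ((m : ℝ) + 1 / 2) a < 0 := by
      have h := deriv_nonneg_right ((hasDerivAt_besselJ hν ha).neg)
        (by rw [Pi.neg_apply, hJa, neg_zero]) hab hnegpos
      rcases lt_or_eq_of_le (by linarith : Bf1 ((m : ℝ) + 1 / 2) a ≤ 0) with h' | h'
      · exact h'
      · exact absurd h' hBf1a
    have hBb_pos : 0 < Bf1 ((m : ℝ) + 1 / 2) b := by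
      have h := deriv_nonpos_left ((hasDerivAt_besselJ hν hb0).neg)
        (by rw [Pi.neg_apply, hJb, neg_zero]) hab hnegpos
      rcases lt_or_eq_of_le (by linarith : 0 ≤ Bf1 ((m : ℝ) + 1 / 2) b) with h' | h'
      · exact h'
      · exact absurd h'.symm hBf1b
    have hF1 : 0 < F k₁ := by
      rw [hFk1]
      nlinarith [mul_pos (mul_pos (mul_pos hs hn) hsq_a) hJk1]
    have hF2 : F k₂ < 0 := by
      rw [hFk2]
      nlinarith [mul_pos (mul_pos (mul_pos (mul_pos hs hn) hsq_b) hJk2) hBb_pos]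
    obtain ⟨k, hk, hFk⟩ := intermediate_value_Ioo' (le_of_lt hk12) hFc ⟨hF2, hF1⟩
    exact ⟨k, hk, hFk⟩

end
end
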